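/- arXiv:1805.05196 — 13 statements merged into one kernel-verified Lean document; each statement's English description precedes it below -/
import Mathlib

section
/- If a permutation p of length n avoids both patterns 123 and 231 and is not an involution, then there exist positive integers a, b, c with a+b+c=n such that p = n (n-1) ... (n-a+1) b (b-1) ... 1 (b+c) (b+c-1) ... (b+1); that is, p consists of three decreasing layers: the a largest entries in decreasing order, then the b smallest entries in decreasing order, then the remaining c entries in decreasing order. -/
/-- A permutation of {1,...,n} is cyclic (a single n-cycle) iff it acts transitively. -/
def IsCyclicPerm {n : ℕ} (p : Equiv.Perm (Fin n)) : Prop :=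
  ∀ x y : Fin n, ∃ m : ℕ, (p ^ m) x = y

/-- `p` contains the pattern `q` (given as a word `q 0, q 1, ...`). -/
def Contains {n k : ℕ} (p : Equiv.Perm (Fin n)) (q : Fin k → Fin k) : Prop :=
  ∃ f : Fin k → Fin n, StrictMono f ∧ ∀ i j : Fin k, q i < q j ↔ p (f i) < p (f j)

def Avoids {n k : ℕ} (p : Equiv.Perm (Fin n)) (q : Fin k → Fin k) : Prop :=
  ¬ Contains p q

def pat123 : Fin 3 → Fin 3 := ![0, 1, 2]
def pat231 : Fin 3 → Fin 3 := ![1, 2, 0]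
def pat132 : Fin 3 → Fin 3 := ![0, 2, 1]
def pat321 : Fin 3 → Fin 3 := ![2, 1, 0]
def pat312 : Fin 3 → Fin 3 := ![2, 0, 1]

/-- `p` is the three-layer permutation of the triple `(a,b,c)`, in 0-based form:
`p_i = n+1-i` for `1 ≤ i ≤ a`, `p_i = a+b+1-i` for `a+1 ≤ i ≤ a+b`,
`p_i = n+b+1-i` for `a+b+1 ≤ i ≤ n` (1-based). -/
def IsTriplePerm (n a b : ℕ) (p : Equiv.Perm (Fin n)) : Prop :=
  ∀ i : Fin n, (p i : ℕ) =
    if (i : ℕ) < a then n - 1 - (i : ℕ)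
    else if (i : ℕ) < a + b then a + b - 1 - (i : ℕ)
    else n + b - 1 - (i : ℕ)

theorem stmt0 (n : ℕ) (p : Equiv.Perm (Fin n))
    (h123 : Avoids p pat123) (h231 : Avoids p pat231) (hinv : p * p ≠ 1) :
    ∃ a b c : ℕ, 0 < a ∧ 0 < b ∧ 0 < c ∧ a + b + c = n ∧ IsTriplePerm n a b p := by
  have hpat1 : ∀ t : Fin 3, (pat123 t : ℕ) = (t : ℕ) := by decide
  have hpat2 : ∀ t : Fin 3, (pat231 t : ℕ) =
      (if (t : ℕ) = 0 then 1 else if (t : ℕ) = 1 then 2 else 0) := by decide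
  have H123 : ∀ i j k : Fin n, (i:ℕ) < (j:ℕ) → (j:ℕ) < (k:ℕ) →
      (p i:ℕ) < (p j:ℕ) → (p j:ℕ) < (p k:ℕ) → False := by
    intro i j k hij hjk h1 h2
    apply h123
    refine ⟨fun t => if (t:ℕ) = 0 then i else if (t:ℕ) = 1 then j else k, ?_, ?_⟩
    · intro x y hxy
      have hx3 := x.isLt; have hy3 := y.isLt
      rw [Fin.lt_def] at hxy ⊢
      dsimp only
      split_ifs <;> omega
    · intro x y
      have hx3 := x.isLt; have hy3 := y.isLt
      rw [Fin.lt_def, Fin.lt_def, hpat1, hpat1]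
      dsimp only
      split_ifs <;> constructor <;> intro h <;> omega
  have H231 : ∀ i j k : Fin n, (i:ℕ) < (j:ℕ) → (j:ℕ) < (k:ℕ) →
      (p k:ℕ) < (p i:ℕ) → (p i:ℕ) < (p j:ℕ) → False := by
    intro i j k hij hjk h1 h2
    apply h231
    refine ⟨fun t => if (t:ℕ) = 0 then i else if (t:ℕ) = 1 then j else k, ?_, ?_⟩
    · intro x y hxy
      have hx3 := x.isLt; have hy3 := y.isLt
      rw [Fin.lt_def] at hxy ⊢
      dsimp only
      split_ifs <;> omega
    · intro x y
      have hx3 := x.isLt; have hy3 := y.isLt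
      rw [Fin.lt_def, Fin.lt_def, hpat2, hpat2]
      dsimp only
      split_ifs <;> constructor <;> intro h <;> omega
  clear h123 h231 hpat1 hpat2
  have hinj : ∀ i j : Fin n, (p i:ℕ) = (p j:ℕ) → i = j :=
    fun i j h => p.injective (Fin.ext h)
  rcases Nat.eq_zero_or_pos n with hn0 | hn
  · subst hn0
    exact absurd (Equiv.ext fun x => absurd x.isLt (by omega)) hinv
  obtain ⟨z, hz⟩ : ∃ z : Fin n, (z:ℕ) = 0 := ⟨⟨0, hn⟩, rfl⟩
  set u : Fin n := p.symm z with hu_def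
  have hu : (p u : ℕ) = 0 := by rw [hu_def, Equiv.apply_symm_apply, hz]
  have hzero : ∀ i : Fin n, (p i : ℕ) = 0 → i = u := by
    intro i h
    exact hinj i u (by rw [hu, h])
  -- D1 : p strictly decreasing on [0, u]
  have D1 : ∀ i j : Fin n, (i:ℕ) < (j:ℕ) → (j:ℕ) ≤ (u:ℕ) → (p j:ℕ) < (p i:ℕ) := by
    intro i j hij hju
    by_contra h
    push_neg at h
    have hlt : (p i:ℕ) < (p j:ℕ) := by
      rcases Nat.lt_or_ge (p i:ℕ) (p j:ℕ) with h' | h'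
      · exact h'
      · have : (p i:ℕ) = (p j:ℕ) := by omega
        have := congrArg Fin.val (hinj i j this)
        omega
    rcases Nat.eq_or_lt_of_le hju with he | hl
    · have : j = u := Fin.ext he
      rw [this, hu] at hlt
      omega
    · have hi0 : (p i:ℕ) ≠ 0 := by
        intro h0
        have := congrArg Fin.val (hzero i h0)
        omega
      exact H231 i j u hij hl (by omega) hlt
  have hun := u.isLt
  rcases Nat.eq_or_lt_of_le (show (u:ℕ) ≤ n-1 by omega) with hA | hul
  -- Case A : u = n-1, p is the decreasing permutation, hence an involution: contradiction
  · exfalso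
    have GA : ∀ d : ℕ, ∀ i : Fin n, n-1-(i:ℕ) = d → (p i:ℕ) = n-1-(i:ℕ) := by
      intro d
      induction d using Nat.strong_induction_on with
      | _ d IH =>
        intro i hd
        have hin := i.isLt
        rcases Nat.eq_zero_or_pos d with rfl | hdpos
        · have : i = u := Fin.ext (by omega)
          rw [this, hu]
          omega
        · obtain ⟨i', hi'⟩ : ∃ i' : Fin n, (i':ℕ) = (i:ℕ)+1 :=
            ⟨⟨(i:ℕ)+1, by omega⟩, rfl⟩
          have hIH := IH (d-1) (by omega) i' (by omega)
          have hd1 := D1 i i' (by omega) (by omega)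
          rcases Nat.eq_or_lt_of_le (show n-1-(i:ℕ) ≤ (p i:ℕ) by omega) with he | hgt
          · omega
          · obtain ⟨m, hpm⟩ : ∃ m : Fin n, (p m:ℕ) = n-1-(i:ℕ) :=
              ⟨p.symm ⟨n-1-(i:ℕ), by omega⟩, by rw [Equiv.apply_symm_apply]⟩
            have hmn := m.isLt
            rcases lt_trichotomy (m:ℕ) (i:ℕ) with h' | h' | h'
            · have := D1 m i h' (by omega)
              omega
            · have : m = i := Fin.ext h'
              rw [this] at hpm
              omega
            · have := IH (n-1-(m:ℕ)) (by omega) m rfl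
              omega
    apply hinv
    apply Equiv.ext
    intro i
    simp only [Equiv.Perm.mul_apply, Equiv.Perm.one_apply]
    have hin := i.isLt
    have h1 := GA (n-1-(i:ℕ)) i rfl
    have h2 := GA (n-1-((p i):ℕ)) (p i) rfl
    exact Fin.ext (by omega)
  -- Case B : u < n-1
  · obtain ⟨last, hlast⟩ : ∃ l : Fin n, (l:ℕ) = n-1 := ⟨⟨n-1, by omega⟩, rfl⟩
    set β := (p last : ℕ) with hβ_def
    have hβn := (p last).isLt
    have hβpos : 0 < β := by
      rcases Nat.eq_zero_or_pos β with h0 | h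
      · have := congrArg Fin.val (hzero last h0)
        omega
      · exact h
    -- D2 : p strictly decreasing after u
    have D2 : ∀ j k : Fin n, (u:ℕ) < (j:ℕ) → (j:ℕ) < (k:ℕ) → (p k:ℕ) < (p j:ℕ) := by
      intro j k h1 h2
      by_contra h
      push_neg at h
      have hlt : (p j:ℕ) < (p k:ℕ) := by
        rcases Nat.lt_or_ge (p j:ℕ) (p k:ℕ) with h' | h'
        · exact h'
        · have : (p j:ℕ) = (p k:ℕ) := by omega
          have := congrArg Fin.val (hinj j k this)
          omega
      have hj0 : (p j:ℕ) ≠ 0 := by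
        intro h0
        have := congrArg Fin.val (hzero j h0)
        omega
      exact H123 u j k h1 h2 (by omega) hlt
    -- values after u are ≥ β
    have D2c : ∀ k : Fin n, (u:ℕ) < (k:ℕ) → β ≤ (p k:ℕ) := by
      intro k hk
      have hkn := k.isLt
      rcases Nat.eq_or_lt_of_le (show (k:ℕ) ≤ n-1 by omega) with he | hl
      · have : k = last := Fin.ext (by omega)
        rw [this]
      · have := D2 k last hk (by omega)
        omega
    -- D4 : early values above β dominate the whole tail
    have D4 : ∀ i k : Fin n, (i:ℕ) ≤ (u:ℕ) → β < (p i:ℕ) → (u:ℕ) < (k:ℕ) →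
        (p k:ℕ) < (p i:ℕ) := by
      intro i k h1 h2 h3
      have hkn := k.isLt
      rcases Nat.eq_or_lt_of_le (show (k:ℕ) ≤ n-1 by omega) with he | hl
      · have : k = last := Fin.ext (by omega)
        rw [this]
        omega
      · by_contra h
        push_neg at h
        have hlt : (p i:ℕ) < (p k:ℕ) := by
          rcases Nat.lt_or_ge (p i:ℕ) (p k:ℕ) with h' | h'
          · exact h'
          · have : (p i:ℕ) = (p k:ℕ) := by omega
            have := congrArg Fin.val (hinj i k this)
            omega
        exact H231 i k last (by omega) (by omega) (by omega) hlt
    -- G2 : the second part of the first run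
    have G2 : ∀ d : ℕ, ∀ i : Fin n, (u:ℕ)-(i:ℕ) = d → (i:ℕ) ≤ (u:ℕ) →
        (u:ℕ)-(i:ℕ) < β → (p i:ℕ) = (u:ℕ)-(i:ℕ) := by
      intro d
      induction d using Nat.strong_induction_on with
      | _ d IH =>
        intro i hd hiu hiβ
        have hin := i.isLt
        rcases Nat.eq_zero_or_pos d with rfl | hdpos
        · have : i = u := Fin.ext (by omega)
          rw [this, hu]
          omega
        · obtain ⟨i', hi'⟩ : ∃ i' : Fin n, (i':ℕ) = (i:ℕ)+1 :=
            ⟨⟨(i:ℕ)+1, by omega⟩, rfl⟩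
          have hIH := IH (d-1) (by omega) i' (by omega) (by omega) (by omega)
          have hd1 := D1 i i' (by omega) (by omega)
          rcases Nat.eq_or_lt_of_le (show (u:ℕ)-(i:ℕ) ≤ (p i:ℕ) by omega) with he | hgt
          · omega
          · obtain ⟨m, hpm⟩ : ∃ m : Fin n, (p m:ℕ) = (u:ℕ)-(i:ℕ) :=
              ⟨p.symm ⟨(u:ℕ)-(i:ℕ), by omega⟩, by rw [Equiv.apply_symm_apply]⟩
            have hmn := m.isLt
            have hmu : (m:ℕ) ≤ (u:ℕ) := by
              by_contra h'
              have := D2c m (by omega)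
              omega
            rcases lt_trichotomy (m:ℕ) (i:ℕ) with h' | h' | h'
            · have := D1 m i h' (by omega)
              omega
            · have : m = i := Fin.ext h'
              rw [this] at hpm
              omega
            · have := IH ((u:ℕ)-(m:ℕ)) (by omega) m rfl (by omega) (by omega)
              omega
    -- G3 : the second run
    have G3 : ∀ d : ℕ, ∀ k : Fin n, n-1-(k:ℕ) = d → (u:ℕ) < (k:ℕ) →
        (p k:ℕ) = β + (n-1-(k:ℕ)) := by
      intro d
      induction d using Nat.strong_induction_on with
      | _ d IH =>
        intro k hd hku
        have hkn := k.isLt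
        rcases Nat.eq_zero_or_pos d with rfl | hdpos
        · have : k = last := Fin.ext (by omega)
          rw [this]
          omega
        · obtain ⟨k', hk'⟩ : ∃ k' : Fin n, (k':ℕ) = (k:ℕ)+1 :=
            ⟨⟨(k:ℕ)+1, by omega⟩, rfl⟩
          have hIH := IH (d-1) (by omega) k' (by omega) (by omega)
          have hd2 := D2 k k' (by omega) (by omega)
          rcases Nat.eq_or_lt_of_le (show β + (n-1-(k:ℕ)) ≤ (p k:ℕ) by omega) with he | hgt
          · omega
          · obtain ⟨m, hpm⟩ : ∃ m : Fin n, (p m:ℕ) = β + (n-1-(k:ℕ)) :=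
              ⟨p.symm ⟨β + (n-1-(k:ℕ)), by have := (p k).isLt; omega⟩,
                by rw [Equiv.apply_symm_apply]⟩
            have hmn := m.isLt
            have hmu : (u:ℕ) < (m:ℕ) := by
              by_contra h'
              push_neg at h'
              have := D4 m k h' (by omega) hku
              omega
            rcases lt_trichotomy (m:ℕ) (k:ℕ) with h' | h' | h'
            · have := D2 m k hmu h'
              omega
            · have : m = k := Fin.ext h'
              rw [this] at hpm
              omega
            · have := IH (n-1-(m:ℕ)) (by omega) m rfl (by omega)
              omega
    have GA2 : ∀ i : Fin n, (i:ℕ) ≤ (u:ℕ) → (u:ℕ)-(i:ℕ) < β →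
        (p i:ℕ) = (u:ℕ)-(i:ℕ) := fun i h1 h2 => G2 _ i rfl h1 h2
    have GA3 : ∀ k : Fin n, (u:ℕ) < (k:ℕ) → (p k:ℕ) = β + (n-1-(k:ℕ)) :=
      fun k h => G3 _ k rfl h
    -- β ≤ u+1
    have hβu : β ≤ (u:ℕ) + 1 := by
      obtain ⟨w, hw⟩ : ∃ w : Fin n, (w:ℕ) = (u:ℕ)+1 := ⟨⟨(u:ℕ)+1, by omega⟩, rfl⟩
      have h1 := GA3 w (by omega)
      have h2 := (p w).isLt
      omega
    rcases Nat.eq_or_lt_of_le hβu with hcase | hba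
    -- β = u+1 : p is a two-layer involution, contradiction
    · exfalso
      apply hinv
      apply Equiv.ext
      intro i
      simp only [Equiv.Perm.mul_apply, Equiv.Perm.one_apply]
      have hin := i.isLt
      rcases le_or_gt (i:ℕ) (u:ℕ) with hi | hi
      · have h1 := GA2 i hi (by omega)
        have h2 := GA2 (p i) (by omega) (by omega)
        exact Fin.ext (by omega)
      · have h1 := GA3 i hi
        have h2 := GA3 (p i) (by omega)
        exact Fin.ext (by omega)
    -- β ≤ u : three genuine layers
    · have G1 : ∀ d : ℕ, ∀ i : Fin n, (i:ℕ) = d → (i:ℕ) < (u:ℕ)+1-β →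
          (p i:ℕ) = n-1-(i:ℕ) := by
        intro d
        induction d using Nat.strong_induction_on with
        | _ d IH =>
          intro i hd hia
          have hin := i.isLt
          obtain ⟨m, hpm⟩ : ∃ m : Fin n, (p m:ℕ) = n-1-(i:ℕ) :=
            ⟨p.symm ⟨n-1-(i:ℕ), by omega⟩, by rw [Equiv.apply_symm_apply]⟩
          have hmn := m.isLt
          have hmu : (m:ℕ) ≤ (u:ℕ) := by
            by_contra h'
            push_neg at h'
            have := GA3 m h'
            omega
          have hmβ : ¬ ((u:ℕ)-(m:ℕ) < β) := by
            intro h'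
            have := GA2 m hmu h'
            omega
          rcases lt_trichotomy (m:ℕ) (i:ℕ) with h' | h' | h'
          · have := IH (m:ℕ) (by omega) m rfl (by omega)
            omega
          · have : m = i := Fin.ext h'
            rw [this] at hpm
            omega
          · have hd1 := D1 i m h' hmu
            rcases Nat.eq_zero_or_pos (i:ℕ) with hi0 | hipos
            · omega
            · obtain ⟨i', hi'⟩ : ∃ i' : Fin n, (i':ℕ) = (i:ℕ)-1 :=
                ⟨⟨(i:ℕ)-1, by omega⟩, rfl⟩
              have hIH := IH ((i:ℕ)-1) (by omega) i' (by omega) (by omega)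
              have hd2 := D1 i' i (by omega) (by omega)
              omega
      refine ⟨(u:ℕ)+1-β, β, n-1-(u:ℕ), by omega, hβpos, by omega, by omega, ?_⟩
      intro i
      have hin := i.isLt
      by_cases h1 : (i:ℕ) < (u:ℕ)+1-β
      · rw [if_pos h1]
        exact G1 (i:ℕ) i rfl h1
      · rw [if_neg h1]
        by_cases h2 : (i:ℕ) < (u:ℕ)+1-β + β
        · rw [if_pos h2]
          have := GA2 i (by omega) (by omega)
          omega
        · rw [if_neg h2]
          have := GA3 i (by omega)
          omega
end

section
/- The number of permutations of length n that avoid both patterns 123 and 231 equals 1 + C(n,2) (where C(n,2) is the binomial coefficient n choose 2). -/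
private theorem iff_swap {α β : Type*} [LinearOrder α] [LinearOrder β] {a b : α} {c d : β}
    (hab : a ≠ b) (hcd : c ≠ d) (h : a < b ↔ c < d) : b < a ↔ d < c := by
  rcases lt_or_gt_of_ne hab with h1 | h1 <;> rcases lt_or_gt_of_ne hcd with h2 | h2
  · exact iff_of_false (asymm h1) (asymm h2)
  · exact absurd (h.mp h1) (asymm h2)
  · exact absurd (h.mpr h2) (asymm h1)
  · exact iff_of_true h1 h2

theorem contains_of_three {n : ℕ} (p : Equiv.Perm (Fin n)) (i j k : Fin n)
    (hij : i < j) (hjk : j < k) (q : Fin 3 → Fin 3) (hq : Function.Injective q)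
    (h0 : q 0 < q 1 ↔ p i < p j) (h1 : q 0 < q 2 ↔ p i < p k)
    (h2 : q 1 < q 2 ↔ p j < p k) : Contains p q := by
  have hik := hij.trans hjk
  have pij : p i ≠ p j := fun e => Fin.ne_of_lt hij (p.injective e)
  have pik : p i ≠ p k := fun e => Fin.ne_of_lt hik (p.injective e)
  have pjk : p j ≠ p k := fun e => Fin.ne_of_lt hjk (p.injective e)
  refine ⟨![i, j, k], ?_, ?_⟩
  · intro a b hab
    fin_cases a <;> fin_cases b <;> simp_all
  · have h0' := iff_swap (hq.ne (by decide : (0:Fin 3) ≠ 1)) pij h0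
    have h1' := iff_swap (hq.ne (by decide : (0:Fin 3) ≠ 2)) pik h1
    have h2' := iff_swap (hq.ne (by decide : (1:Fin 3) ≠ 2)) pjk h2
    intro a b
    fin_cases a <;> fin_cases b
    · simp
    · exact h0
    · exact h1
    · exact h0'
    · simp
    · exact h2
    · exact h1'
    · exact h2'
    · simp

theorem avoid_iff {n : ℕ} (p : Equiv.Perm (Fin n)) :
    (Avoids p pat123 ∧ Avoids p pat231) ↔
      ∀ i j k : Fin n, i < j → j < k → p i < p j → p i < p k ∧ p k < p j := by
  constructor
  · rintro ⟨h123, h231⟩ i j k hij hjk hpij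
    have hik : i < k := hij.trans hjk
    have pik : p i ≠ p k := fun e => Fin.ne_of_lt hik (p.injective e)
    have pjk : p j ≠ p k := fun e => Fin.ne_of_lt hjk (p.injective e)
    have hik' : p i < p k := by
      by_contra hc
      have hki : p k < p i := lt_of_le_of_ne (not_lt.mp hc) pik.symm
      exact h231 (contains_of_three p i j k hij hjk pat231 (by decide)
        (iff_of_true (by decide) hpij)
        (iff_of_false (by decide) (not_lt.mpr hki.le))
        (iff_of_false (by decide) (not_lt.mpr (hki.trans hpij).le)))
    refine ⟨hik', ?_⟩
    by_contra hc
    have hjk' : p j < p k := lt_of_le_of_ne (not_lt.mp hc) pjk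
    exact h123 (contains_of_three p i j k hij hjk pat123 (by decide)
      (iff_of_true (by decide) hpij)
      (iff_of_true (by decide) (hpij.trans hjk'))
      (iff_of_true (by decide) hjk'))
  · intro H
    constructor
    · rintro ⟨f, hmono, hf⟩
      have h01 : f 0 < f 1 := hmono (by decide)
      have h12 : f 1 < f 2 := hmono (by decide)
      have a01 : p (f 0) < p (f 1) := (hf 0 1).mp (by decide)
      have a12 : p (f 1) < p (f 2) := (hf 1 2).mp (by decide)
      exact absurd a12 (not_lt.mpr (H _ _ _ h01 h12 a01).2.le)
    · rintro ⟨f, hmono, hf⟩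
      have h01 : f 0 < f 1 := hmono (by decide)
      have h12 : f 1 < f 2 := hmono (by decide)
      have a01 : p (f 0) < p (f 1) := (hf 0 1).mp (by decide)
      have a20 : p (f 2) < p (f 0) := (hf 2 0).mp (by decide)
      exact absurd a20 (not_lt.mpr (H _ _ _ h01 h12 a01).1.le)


def gval (n x y i : ℕ) : ℕ :=
  if i < x then n - 1 - i else if i < y then y - 1 - i else n + (y - x) - 1 - i

theorem gval_lt {n x y i : ℕ} (hxy : x < y) (hy : y < n) (hi : i < n) :
    gval n x y i < n := by
  unfold gval; split_ifs <;> omega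

theorem gfun_inj {n : ℕ} (x y : Fin n) (h : (x:ℕ) < y) :
    Function.Injective (fun i : Fin n => (⟨gval n x y i, gval_lt h y.isLt i.isLt⟩ : Fin n)) := by
  intro i j hij
  have h1 : gval n x y i = gval n x y j := congrArg Fin.val hij
  have hi := i.isLt; have hj := j.isLt; have hy := y.isLt
  ext
  unfold gval at h1; split_ifs at h1 <;> omega

noncomputable def gperm {n : ℕ} (x y : Fin n) (h : x < y) : Equiv.Perm (Fin n) :=
  Equiv.ofBijective _ ((Finite.injective_iff_bijective).mp (gfun_inj x y h))

theorem gperm_val {n : ℕ} (x y : Fin n) (h : x < y) (i : Fin n) :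
    ((gperm x y h) i : ℕ) = gval n x y i := rfl

def dperm (n : ℕ) : Equiv.Perm (Fin n) :=
  ⟨fun i => ⟨n - 1 - i, by have := i.isLt; omega⟩,
   fun i => ⟨n - 1 - i, by have := i.isLt; omega⟩,
   fun i => by ext; have := i.isLt; simp; omega,
   fun i => by ext; have := i.isLt; simp; omega⟩

theorem dperm_val {n : ℕ} (i : Fin n) : ((dperm n) i : ℕ) = n - 1 - i := rfl

theorem gperm_cond {n : ℕ} (x y : Fin n) (h : x < y) :
    ∀ i j k : Fin n, i < j → j < k → (gperm x y h) i < (gperm x y h) j →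
      (gperm x y h) i < (gperm x y h) k ∧ (gperm x y h) k < (gperm x y h) j := by
  intro i j k hij hjk hpij
  have hy := y.isLt; have hi := i.isLt; have hj := j.isLt; have hk := k.isLt
  have hxy : (x:ℕ) < y := h
  rw [Fin.lt_def] at hij hjk hpij
  rw [Fin.lt_def, Fin.lt_def]
  rw [gperm_val, gperm_val] at hpij
  change gval n x y i < gval n x y k ∧ gval n x y k < gval n x y j
  unfold gval at hpij ⊢
  split_ifs at hpij ⊢ <;> omega

theorem dperm_cond {n : ℕ} :
    ∀ i j k : Fin n, i < j → j < k → (dperm n) i < (dperm n) j →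
      (dperm n) i < (dperm n) k ∧ (dperm n) k < (dperm n) j := by
  intro i j k hij hjk hpij
  have hi := i.isLt; have hj := j.isLt; have hk := k.isLt
  rw [Fin.lt_def] at hij hjk hpij
  simp only [dperm_val] at hpij ⊢
  omega

theorem perm_ext_of_cmp {n : ℕ} (σ τ : Equiv.Perm (Fin n)) (h : ∀ i j, σ i < σ j ↔ τ i < τ j) : σ = τ := by
  have hsm : StrictMono (σ ∘ τ.symm) := by
    intro a b hab
    have := (h (τ.symm a) (τ.symm b)).mpr (by simpa using hab)
    simpa using this
  have hsurj : Function.Surjective (σ ∘ τ.symm) :=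
    σ.surjective.comp τ.symm.surjective
  have : StrictMono.orderIsoOfSurjective _ hsm hsurj = OrderIso.refl (Fin n) :=
    Subsingleton.elim _ _
  have hfun : (σ ∘ τ.symm) = id := by
    have := congrArg (fun (e : Fin n ≃o Fin n) => (e : Fin n → Fin n)) this
    simpa [StrictMono.coe_orderIsoOfSurjective] using this
  ext i
  have := congrFun hfun (τ i)
  simp only [Function.comp_apply, Equiv.symm_apply_apply, id_eq] at this
  exact congrArg Fin.val this

private theorem iff_swap' {α β : Type*} [LinearOrder α] [LinearOrder β] {a b : α} {c d : β}
    (hab : a ≠ b) (hcd : c ≠ d) (h : a < b ↔ c < d) : b < a ↔ d < c := by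
  rcases lt_or_gt_of_ne hab with h1 | h1 <;> rcases lt_or_gt_of_ne hcd with h2 | h2
  · exact iff_of_false (asymm h1) (asymm h2)
  · exact absurd (h.mp h1) (asymm h2)
  · exact absurd (h.mpr h2) (asymm h1)
  · exact iff_of_true h1 h2

theorem classify {n : ℕ} (p : Equiv.Perm (Fin n))
    (H : ∀ i j k : Fin n, i < j → j < k → p i < p j → p i < p k ∧ p k < p j) :
    p = dperm n ∨ ∃ x y : Fin n, ∃ h : x < y, p = gperm x y h := by
  classical
  by_cases hasc : ∃ j : Fin n, ∃ i, i < j ∧ p i < p j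
  · right
    set A : Finset (Fin n) := Finset.univ.filter (fun j => ∃ i, i < j ∧ p i < p j) with hA
    have hAne : A.Nonempty := by
      obtain ⟨j, hj⟩ := hasc; exact ⟨j, by simp [hA, hj]⟩
    set y : Fin n := A.min' hAne with hydef
    have hymem : ∃ i, i < y ∧ p i < p y := by
      exact (Finset.mem_filter.mp (A.min'_mem hAne)).2
    have hymin : ∀ j : Fin n, (∃ i, i < j ∧ p i < p j) → y ≤ j := by
      intro j hj; exact A.min'_le j (by simp [hA, hj])
    set B : Finset (Fin n) := Finset.univ.filter (fun i => p i < p y) with hB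
    have hBne : B.Nonempty := by
      obtain ⟨i, hi1, hi2⟩ := hymem; exact ⟨i, by simp [hB, hi2]⟩
    set x : Fin n := B.min' hBne with hxdef
    have hx : p x < p y := by
      have h' := (Finset.mem_filter.mp (B.min'_mem hBne)).2
      simpa using h'
    have hxmin : ∀ i : Fin n, p i < p y → x ≤ i := by
      intro i hi; exact B.min'_le i (by simp [hB, hi])
    have hxy : x < y := by
      obtain ⟨i0, hi0, hpi0⟩ := hymem
      exact lt_of_le_of_lt (hxmin i0 hpi0) hi0
    refine ⟨x, y, hxy, ?_⟩
    have noasc : ∀ i j : Fin n, i < j → j < y → p j < p i := by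
      intro i j hij hjy
      by_contra hc
      have hne : p i ≠ p j := fun e => Fin.ne_of_lt hij (p.injective e)
      have : p i < p j := lt_of_le_of_ne (not_lt.mp hc) hne
      exact absurd (hymin j ⟨i, hij, this⟩) (not_le.mpr hjy)
    have pyi : ∀ i : Fin n, i < x → p y < p i := by
      intro i hix
      have h1 : ¬ p i < p y := fun hc => absurd (hxmin i hc) (not_le.mpr hix)
      have hne : p y ≠ p i := fun e => Fin.ne_of_lt (hix.trans hxy) (p.injective e.symm)
      exact lt_of_le_of_ne (not_lt.mp h1) hne
    have mid_lt : ∀ i : Fin n, x ≤ i → i < y → p i < p y := by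
      intro i hxi hiy
      rcases eq_or_lt_of_le hxi with rfl | hxi
      · exact hx
      · exact (noasc x i hxi hiy).trans hx
    have px_lt : ∀ k : Fin n, y ≤ k → p x < p k := by
      intro k hyk
      rcases eq_or_lt_of_le hyk with rfl | hyk
      · exact hx
      · exact (H x y k hxy hyk hx).1
    have desc_last : ∀ k l : Fin n, y ≤ k → k < l → p l < p k := by
      intro k l hyk hkl
      exact (H x k l (lt_of_lt_of_le hxy hyk) hkl (px_lt k hyk)).2
    have lt_y_last : ∀ k : Fin n, y < k → p k < p y := by
      intro k hyk; exact (H x y k hxy hyk hx).2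
    have mid_lt_last : ∀ i k : Fin n, x ≤ i → i < y → y ≤ k → p i < p k := by
      intro i k hxi hiy hyk
      rcases eq_or_lt_of_le hyk with rfl | hyk
      · exact mid_lt i hxi hiy
      · exact (H i y k hiy hyk (mid_lt i hxi hiy)).1
    have first_gt_last : ∀ i k : Fin n, i < x → y ≤ k → p k < p i := by
      intro i k hix hyk
      rcases eq_or_lt_of_le hyk with rfl | hyk
      · exact pyi i hix
      · exact (lt_y_last k hyk).trans (pyi i hix)
    have hy' := y.isLt
    have hxy' : (x:ℕ) < y := hxy
    have hcmp : ∀ i j : Fin n, i < j → (p i < p j ↔ (gperm x y hxy) i < (gperm x y hxy) j) := by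
      intro i j hij
      have hi' := i.isLt; have hj' := j.isLt
      have hij' : (i:ℕ) < j := hij
      by_cases h1 : (j:ℕ) < x
      · exact iff_of_false (not_lt.mpr (noasc i j hij (show j < y from Fin.lt_def.mpr (lt_of_lt_of_le h1 hxy'.le))).le)
          (by show ¬ gval n x.val y.val i.val < gval n x.val y.val j.val
              unfold gval; split_ifs <;> omega)
      · by_cases h2 : (j:ℕ) < y
        · exact iff_of_false (not_lt.mpr (noasc i j hij (Fin.lt_def.mpr h2)).le)
            (by show ¬ gval n x.val y.val i.val < gval n x.val y.val j.val
                unfold gval; split_ifs <;> omega)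
        · by_cases h3 : (i:ℕ) < x
          · exact iff_of_false (not_lt.mpr (first_gt_last i j (Fin.lt_def.mpr h3) (Fin.le_def.mpr (not_lt.mp h2))).le)
              (by show ¬ gval n x.val y.val i.val < gval n x.val y.val j.val
                  unfold gval; split_ifs <;> omega)
          · by_cases h4 : (i:ℕ) < y
            · exact iff_of_true
                (mid_lt_last i j (Fin.le_def.mpr (not_lt.mp h3)) (Fin.lt_def.mpr h4) (Fin.le_def.mpr (not_lt.mp h2)))
                (by show gval n x.val y.val i.val < gval n x.val y.val j.val
                    unfold gval; split_ifs <;> omega)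
            · exact iff_of_false (not_lt.mpr (desc_last i j (Fin.le_def.mpr (not_lt.mp h4)) hij).le)
                (by show ¬ gval n x.val y.val i.val < gval n x.val y.val j.val
                    unfold gval; split_ifs <;> omega)
    apply perm_ext_of_cmp
    intro i j
    rcases lt_trichotomy i j with hij | rfl | hij
    · exact hcmp i j hij
    · simp
    · have h1 : p j ≠ p i := fun e => Fin.ne_of_lt hij (p.injective e)
      have h2 : (gperm x y hxy) j ≠ (gperm x y hxy) i :=
        fun e => Fin.ne_of_lt hij ((gperm x y hxy).injective e)
      exact iff_swap' h1 h2 (hcmp j i hij)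
  · left
    push_neg at hasc
    apply perm_ext_of_cmp
    intro i j
    have hi' := i.isLt; have hj' := j.isLt
    rcases lt_trichotomy i j with hij | rfl | hij
    · refine iff_of_false (not_lt.mpr (hasc j i hij)) ?_
      show ¬ (n - 1 - i.val) < (n - 1 - j.val)
      have : (i:ℕ) < j := hij; omega
    · simp
    · have hne : p j ≠ p i := fun e => Fin.ne_of_lt hij (p.injective e)
      refine iff_of_true (lt_of_le_of_ne (hasc i j hij) (fun e => Fin.ne_of_lt hij (p.injective e).symm)) ?_
      show (n - 1 - i.val) < (n - 1 - j.val)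
      have : (j:ℕ) < i := hij; omega


section
variable (n : ℕ)

def pairEquiv : {q : Fin n × Fin n // q.1 < q.2} ≃ Σ j : Fin n, Fin j.val where
  toFun q := ⟨q.1.2, ⟨q.1.1.val, q.2⟩⟩
  invFun s := ⟨(⟨s.2.val, s.2.isLt.trans s.1.isLt⟩, s.1), s.2.isLt⟩
  left_inv q := rfl
  right_inv s := rfl

theorem card_pairs : Nat.card {q : Fin n × Fin n // q.1 < q.2} = n.choose 2 := by
  rw [Nat.card_eq_fintype_card, Fintype.card_congr (pairEquiv n), Fintype.card_sigma]
  simp only [Fintype.card_fin]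
  rw [show (∑ x : Fin n, (x:ℕ)) = ∑ i ∈ Finset.range n, i from Fin.sum_univ_eq_sum_range (fun i => i) n,
    Finset.sum_range_id, Nat.choose_two_right]
end

theorem stmt1 (n : ℕ) :
    Nat.card {p : Equiv.Perm (Fin n) // Avoids p pat123 ∧ Avoids p pat231} =
      1 + n.choose 2 := by
  classical
  set G' : {q : Fin n × Fin n // q.1 < q.2} → Equiv.Perm (Fin n) :=
    fun q => gperm q.1.1 q.1.2 q.2 with hG
  have key : ∀ p : Equiv.Perm (Fin n), (Avoids p pat123 ∧ Avoids p pat231) ↔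
      (p = dperm n ∨ ∃ q, G' q = p) := by
    intro p
    constructor
    · intro h
      rcases classify p ((avoid_iff p).mp h) with h1 | ⟨x, y, hxy, rfl⟩
      · exact Or.inl h1
      · exact Or.inr ⟨⟨(x, y), hxy⟩, rfl⟩
    · rintro (rfl | ⟨⟨⟨x, y⟩, hxy⟩, rfl⟩)
      · exact (avoid_iff _).mpr dperm_cond
      · exact (avoid_iff _).mpr (gperm_cond x y hxy)
  have hinj : Function.Injective G' := by
    rintro ⟨⟨x, y⟩, hxy⟩ ⟨⟨x', y'⟩, hxy'⟩ h
    have hn : 0 < n := x.pos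
    have e1 : gval n x y (n-1) = gval n x' y' (n-1) :=
      congrArg (fun σ : Equiv.Perm (Fin n) => (σ ⟨n-1, by omega⟩ : ℕ)) h
    have hy1 : (y:ℕ) - 1 < n := by have := y.isLt; omega
    have e2 : gval n x y ((y:ℕ)-1) = gval n x' y' ((y:ℕ)-1) :=
      congrArg (fun σ : Equiv.Perm (Fin n) => (σ ⟨(y:ℕ)-1, hy1⟩ : ℕ)) h
    have hxy1 : (x:ℕ) < y := hxy
    have hxy1' : (x':ℕ) < y' := hxy'
    have hyn := y.isLt; have hyn' := y'.isLt; have hxn := x.isLt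
    unfold gval at e1 e2
    have hval : (x:ℕ) = x' ∧ (y:ℕ) = y' := by split_ifs at e1 e2 <;> omega
    simp only [Subtype.mk_eq_mk, Prod.mk.injEq]
    exact ⟨Fin.ext hval.1, Fin.ext hval.2⟩
  have hd : dperm n ∉ Set.range G' := by
    rintro ⟨⟨⟨x, y⟩, hxy⟩, hq⟩
    have hn : 0 < n := x.pos
    have e1 : gval n x y (n-1) = n - 1 - (n-1) :=
      congrArg (fun σ : Equiv.Perm (Fin n) => (σ ⟨n-1, by omega⟩ : ℕ)) hq
    have hxy1 : (x:ℕ) < y := hxy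
    have hyn := y.isLt
    unfold gval at e1; split_ifs at e1 <;> omega
  have h1 : Nat.card {p : Equiv.Perm (Fin n) // Avoids p pat123 ∧ Avoids p pat231}
      = Nat.card ↥(insert (dperm n) (Set.range G')) :=
    Nat.card_congr (Equiv.subtypeEquivRight (fun p => by
      rw [key p]; simp [Set.mem_insert_iff, eq_comm]))
  rw [h1, Nat.card_coe_set_eq, Set.ncard_insert_of_notMem hd]
  have h2 : (Set.range G').ncard = Nat.card {q : Fin n × Fin n // q.1 < q.2} := by
    rw [← Nat.card_coe_set_eq]
    exact (Nat.card_congr (Equiv.ofInjective G' hinj)).symm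
  rw [h2, card_pairs]
  omega
end

section
/- For positive integers a, b, c with a+b+c=n, let p(a,b,c) be the permutation of {1,...,n} defined by p_i = n+1-i for 1 ≤ i ≤ a, p_i = a+b+1-i for a+1 ≤ i ≤ a+b, and p_i = n+b+1-i for a+b+1 ≤ i ≤ n. Then p(a,b,c) is a cyclic permutation (a single n-cycle) if and only if p(a,c,b) is a cyclic permutation. -/
lemma key_aux (n a b c : ℕ) (habc : a + b + c = n) (p q : Equiv.Perm (Fin n))
    (hp : IsTriplePerm n a b p) (hq : IsTriplePerm n a c q) (x : Fin n) :
    p ((q x).rev) = x.rev := by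
  have hx := hq x
  have hp' := hp ((q x).rev)
  have h1 : ((q x).rev : ℕ) = n - 1 - (q x : ℕ) := by
    rw [Fin.val_rev]; omega
  have hxlt := x.isLt
  have hqlt := (q x).isLt
  apply Fin.ext
  rw [Fin.val_rev]
  rw [h1] at hp'
  rw [hp']
  split_ifs at hx ⊢ <;> omega

lemma rev_conj_eq {n : ℕ} (p q : Equiv.Perm (Fin n))
    (key : ∀ x, p ((q x).rev) = x.rev) :
    q = Fin.revPerm * p⁻¹ * Fin.revPerm := by
  apply Equiv.ext
  intro x
  have h := key x
  have h2 : (q x).rev = p⁻¹ x.rev := by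
    rw [← h]; simp
  have : (Fin.revPerm * p⁻¹ * Fin.revPerm : Equiv.Perm (Fin n)) x
      = (p⁻¹ (Fin.revPerm x)).rev := rfl
  rw [this]
  show q x = (p⁻¹ x.rev).rev
  rw [← h2, Fin.rev_rev]

lemma cyc_transfer {n : ℕ} (p q : Equiv.Perm (Fin n))
    (h : q = Fin.revPerm * p⁻¹ * Fin.revPerm) :
    IsCyclicPerm p → IsCyclicPerm q := by
  intro hcyc x y
  obtain ⟨m, hm⟩ := hcyc y.rev x.rev
  refine ⟨m, ?_⟩
  have hrinv : (Fin.revPerm : Equiv.Perm (Fin n))⁻¹ = Fin.revPerm := Fin.revPerm_symm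
  have hconj : q ^ m = Fin.revPerm * (p ^ m)⁻¹ * Fin.revPerm := by
    rw [h]
    nth_rewrite 2 [← hrinv]
    rw [conj_pow, hrinv, inv_pow]
  rw [hconj]
  have : (Fin.revPerm * (p ^ m)⁻¹ * Fin.revPerm : Equiv.Perm (Fin n)) x
      = ((p ^ m)⁻¹ x.rev).rev := rfl
  rw [this, ← hm]
  simp

theorem stmt2 (n a b c : ℕ) (ha : 0 < a) (hb : 0 < b) (hc : 0 < c)
    (habc : a + b + c = n) (p q : Equiv.Perm (Fin n))
    (hp : IsTriplePerm n a b p) (hq : IsTriplePerm n a c q) :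
    IsCyclicPerm p ↔ IsCyclicPerm q := by
  have habc' : a + c + b = n := by omega
  constructor
  · exact cyc_transfer p q (rev_conj_eq p q (key_aux n a b c habc p q hp hq))
  · exact cyc_transfer q p (rev_conj_eq q p (key_aux n a c b habc' q p hq hp))
end

section
/- For positive integers a, b, c with a+b+c=n, let p(a,b,c) be the permutation defined by p_i = n+1-i for 1 ≤ i ≤ a, p_i = a+b+1-i for a+1 ≤ i ≤ a+b, and p_i = n+b+1-i for a+b+1 ≤ i ≤ n. If p(a,b,c) is a cyclic permutation, then a ≤ floor(n/2) and c ≤ floor(n/2). -/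
lemma invariant_pow {n : ℕ} (p : Equiv.Perm (Fin n)) (P : Fin n → Prop)
    (h : ∀ x, P x → P (p x)) : ∀ m x, P x → P ((p ^ m) x) := by
  intro m
  induction m with
  | zero => intro x hx; simpa using hx
  | succ m ih =>
    intro x hx
    rw [pow_succ, Equiv.Perm.mul_apply]
    exact ih _ (h x hx)

theorem stmt3 (n a b c : ℕ) (ha : 0 < a) (hb : 0 < b) (hc : 0 < c)
    (habc : a + b + c = n) (p : Equiv.Perm (Fin n))
    (hp : IsTriplePerm n a b p) (hcyc : IsCyclicPerm p) :
    a ≤ n / 2 ∧ c ≤ n / 2 := by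
  have hn0 : 0 < n := by omega
  constructor
  · by_contra h
    have hn : n < 2 * a := by omega
    have hinv : ∀ x : Fin n, (n - a ≤ (x:ℕ) ∧ (x:ℕ) < a) →
        (n - a ≤ (p x : ℕ) ∧ (p x : ℕ) < a) := by
      intro x ⟨h1, h2⟩
      have hx := hp x
      rw [if_pos h2] at hx
      have := x.isLt
      omega
    obtain ⟨m, hm⟩ := hcyc ⟨n - a, by omega⟩ ⟨0, hn0⟩
    have := invariant_pow p _ hinv m ⟨n - a, by omega⟩ (by constructor <;> simp <;> omega)
    rw [hm] at this
    simp at this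
    omega
  · by_contra h
    have hn : n < 2 * c := by omega
    have hinv : ∀ x : Fin n, (a + b ≤ (x:ℕ) ∧ (x:ℕ) < b + c) →
        (a + b ≤ (p x : ℕ) ∧ (p x : ℕ) < b + c) := by
      intro x ⟨h1, h2⟩
      have hx := hp x
      rw [if_neg (by omega), if_neg (by omega)] at hx
      have := x.isLt
      omega
    obtain ⟨m, hm⟩ := hcyc ⟨a + b, by omega⟩ ⟨0, hn0⟩
    have := invariant_pow p _ hinv m ⟨a + b, by omega⟩ (by constructor <;> simp <;> omega)
    rw [hm] at this
    simp at this
    omega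
end

section
/- For positive integers a, b, c with a+b+c=n, let p(a,b,c) be the permutation defined by p_i = n+1-i for 1 ≤ i ≤ a, p_i = a+b+1-i for a+1 ≤ i ≤ a+b, and p_i = n+b+1-i for a+b+1 ≤ i ≤ n. If p(a,b,c) is a cyclic permutation, then a ≥ b and a ≥ c. -/
theorem stmt4 (n a b c : ℕ) (ha : 0 < a) (hb : 0 < b) (hc : 0 < c)
    (habc : a + b + c = n) (p : Equiv.Perm (Fin n))
    (hp : IsTriplePerm n a b p) (hcyc : IsCyclicPerm p) :
    b ≤ a ∧ c ≤ a := by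
  have hn : a < n := by omega
  have hab : a + b < n + 1 := by omega
  constructor
  · by_contra hba
    push_neg at hba
    have key : ∀ m : ℕ, a ≤ ((p ^ m) ⟨a, hn⟩ : ℕ) ∧ ((p ^ m) ⟨a, hn⟩ : ℕ) < b := by
      intro m
      induction m with
      | zero => simp; omega
      | succ m ih =>
        rw [pow_succ', Equiv.Perm.mul_apply]
        have h := hp ((p ^ m) ⟨a, hn⟩)
        rw [if_neg (by omega), if_pos (by omega)] at h
        omega
    obtain ⟨m, hm⟩ := hcyc ⟨a, hn⟩ ⟨0, by omega⟩
    have h2 := key m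
    rw [hm] at h2
    simp at h2
    omega
  · by_contra hca
    push_neg at hca
    have hn2 : a + b < n := by omega
    have key : ∀ m : ℕ, a + b ≤ ((p ^ m) ⟨a + b, hn2⟩ : ℕ) ∧
        ((p ^ m) ⟨a + b, hn2⟩ : ℕ) < b + c := by
      intro m
      induction m with
      | zero => simp; omega
      | succ m ih =>
        rw [pow_succ', Equiv.Perm.mul_apply]
        have h := hp ((p ^ m) ⟨a + b, hn2⟩)
        rw [if_neg (by omega), if_neg (by omega)] at h
        omega
    obtain ⟨m, hm⟩ := hcyc ⟨a + b, hn2⟩ ⟨0, by omega⟩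
    have h2 := key m
    rw [hm] at h2
    simp at h2
    omega
end

section
/- For positive integers a, b, c with a+b+c=n, let p(a,b,c) be the permutation defined by p_i = n+1-i for 1 ≤ i ≤ a, p_i = a+b+1-i for a+1 ≤ i ≤ a+b, and p_i = n+b+1-i for a+b+1 ≤ i ≤ n. If p(a,b,c) is a cyclic permutation, then gcd(b,c) ≤ 2; moreover, if gcd(b,c) = 2, then a is even. -/
theorem stmt5 (n a b c : ℕ) (ha : 0 < a) (hb : 0 < b) (hc : 0 < c)
    (habc : a + b + c = n) (p : Equiv.Perm (Fin n))
    (hp : IsTriplePerm n a b p) (hcyc : IsCyclicPerm p) :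
    Nat.gcd b c ≤ 2 ∧ (Nat.gcd b c = 2 → Even a) := by
  set g := Nat.gcd b c with hg
  have hgb : g ∣ b := Nat.gcd_dvd_left b c
  have hgc : g ∣ c := Nat.gcd_dvd_right b c
  have hg0 : 0 < g := Nat.gcd_pos_of_pos_left c hb
  haveI : NeZero g := ⟨hg0.ne'⟩
  have hbz : ((b : ℕ) : ZMod g) = 0 := (ZMod.natCast_eq_zero_iff b g).mpr hgb
  have hcz : ((c : ℕ) : ZMod g) = 0 := (ZMod.natCast_eq_zero_iff c g).mpr hgc
  have hn : ((n : ℕ) : ZMod g) = (a : ZMod g) := by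
    rw [← habc]; push_cast; rw [hbz, hcz]; ring
  have key : ∀ x : Fin n, ((p x : ℕ) : ZMod g) = (a : ZMod g) - 1 - ((x : ℕ) : ZMod g) := by
    intro x
    have hx := hp x
    have hxn : (x : ℕ) < n := x.isLt
    rcases lt_or_ge (x : ℕ) a with h1 | h1
    · rw [hx, if_pos h1]
      have hle : 1 + (x : ℕ) ≤ n := by omega
      have e : n - 1 - (x : ℕ) = n - (1 + (x : ℕ)) := by omega
      rw [e, Nat.cast_sub hle, hn]
      push_cast; ring
    · rcases lt_or_ge (x : ℕ) (a + b) with h2 | h2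
      · rw [hx, if_neg (by omega), if_pos h2]
        have hle : 1 + (x : ℕ) ≤ a + b := by omega
        have e : a + b - 1 - (x : ℕ) = a + b - (1 + (x : ℕ)) := by omega
        rw [e, Nat.cast_sub hle]
        push_cast; rw [hbz]; ring
      · rw [hx, if_neg (by omega), if_neg (by omega)]
        have hle : 1 + (x : ℕ) ≤ n + b := by omega
        have e : n + b - 1 - (x : ℕ) = n + b - (1 + (x : ℕ)) := by omega
        rw [e, Nat.cast_sub hle]
        push_cast; rw [hbz, hn]; ring
  have orbit : ∀ m : ℕ, ∀ x : Fin n,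
      (((p ^ m) x : ℕ) : ZMod g) = ((x : ℕ) : ZMod g) ∨
      (((p ^ m) x : ℕ) : ZMod g) = (a : ZMod g) - 1 - ((x : ℕ) : ZMod g) := by
    intro m
    induction m with
    | zero => intro x; left; simp
    | succ m ih =>
      intro x
      have hpow : (p ^ (m + 1)) x = p ((p ^ m) x) := by
        rw [pow_succ', Equiv.Perm.mul_apply]
      rcases ih x with h | h
      · right; rw [hpow, key, h]
      · left; rw [hpow, key, h]; ring
  have hgb' : g ≤ b := Nat.le_of_dvd hb hgb
  have claim : ∀ r : ℕ, r < g → ((r : ZMod g) = 0 ∨ (r : ZMod g) = (a : ZMod g) - 1) := by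
    intro r hr
    have hrn : r < n := by omega
    obtain ⟨m, hm⟩ := hcyc ⟨0, by omega⟩ ⟨r, hrn⟩
    rcases orbit m ⟨0, by omega⟩ with h | h <;> rw [hm] at h <;> simp at h
    · left; exact h
    · right; rw [h]; try ring
  have inj : ∀ r s : ℕ, r < g → s < g → (r : ZMod g) = (s : ZMod g) → r = s := by
    intro r s hr hs h
    have := congrArg ZMod.val h
    rwa [ZMod.val_cast_of_lt hr, ZMod.val_cast_of_lt hs] at this
  have hgle : g ≤ 2 := by
    by_contra hgt
    push_neg at hgt
    have c1 := claim 1 (by omega)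
    have c2 := claim 2 (by omega)
    have h10 : (1 : ℕ) ≠ 0 := one_ne_zero
    have h1ne : ((1 : ℕ) : ZMod g) ≠ 0 := by
      intro h; exact h10 (inj 1 0 (by omega) (by omega) (by simpa using h))
    have h2ne : ((2 : ℕ) : ZMod g) ≠ 0 := by
      intro h; exact (by norm_num : (2:ℕ) ≠ 0) (inj 2 0 (by omega) (by omega) (by simpa using h))
    have e1 : ((1 : ℕ) : ZMod g) = (a : ZMod g) - 1 := c1.resolve_left h1ne
    have e2 : ((2 : ℕ) : ZMod g) = (a : ZMod g) - 1 := c2.resolve_left h2ne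
    have : (1 : ℕ) = 2 := inj 1 2 (by omega) (by omega) (e1.trans e2.symm)
    omega
  refine ⟨hgle, ?_⟩
  intro h2
  rw [h2] at claim
  have c1 := claim 1 (by omega)
  have h1ne : ((1 : ℕ) : ZMod 2) ≠ 0 := by decide
  have e1 : ((1 : ℕ) : ZMod 2) = (a : ZMod 2) - 1 := c1.resolve_left h1ne
  have haz : (a : ZMod 2) = 0 := by
    have e1' : (1 : ZMod 2) = (a : ZMod 2) - 1 := by simpa using e1
    have : (a : ZMod 2) = 1 + 1 := by linear_combination -e1'
    rw [this]; decide
  have : (2 : ℕ) ∣ a := (ZMod.natCast_eq_zero_iff a 2).mp haz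
  obtain ⟨k, hk⟩ := this
  exact ⟨k, by omega⟩
end

section
/- For positive integers a, b, c with a+b+c=n and a=b+c, let p(a,b,c) be the permutation defined by p_i = n+1-i for 1 ≤ i ≤ a, p_i = a+b+1-i for a+1 ≤ i ≤ a+b, and p_i = n+b+1-i for a+b+1 ≤ i ≤ n. If p(a,b,c) is a cyclic permutation, then gcd(b,c) = 1. -/
theorem stmt6 (n a b c : ℕ) (ha : 0 < a) (hb : 0 < b) (hc : 0 < c)
    (habc : a + b + c = n) (haeq : a = b + c) (p : Equiv.Perm (Fin n))
    (hp : IsTriplePerm n a b p) (hcyc : IsCyclicPerm p) :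
    Nat.gcd b c = 1 := by
  have hn : n = a + a := by omega
  have ha2 : 2 ≤ a := by omega
  -- p sends the bottom half to the top half
  have hbot : ∀ x : Fin n, (x : ℕ) < a → a ≤ (p x : ℕ) := by
    intro x hx
    have := hp x
    rw [if_pos hx] at this
    omega
  -- p squared acts on the bottom half as addition of b mod a
  have hsq : ∀ x : Fin n, (x : ℕ) < a → ((p (p x)) : ℕ) = ((x : ℕ) + b) % a := by
    intro x hx
    have h1 := hp x
    rw [if_pos hx] at h1
    have h2 := hp (p x)
    rw [h1] at h2
    rw [if_neg (by omega)] at h2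
    by_cases hxc : (x : ℕ) < c
    · rw [if_neg (by omega)] at h2
      rw [Nat.mod_eq_of_lt (by omega)]
      omega
    · rw [if_pos (by omega)] at h2
      have : ((x : ℕ) + b) % a = (x : ℕ) + b - a := by
        rw [Nat.mod_eq_sub_mod (by omega), Nat.mod_eq_of_lt (by omega)]
      omega
  -- iterate: p^(2m) on the bottom half
  have hiter : ∀ m : ℕ, ∀ x : Fin n, (x : ℕ) < a →
      (((p ^ (2 * m)) x : ℕ)) = ((x : ℕ) + m * b) % a := by
    intro m
    induction m with
    | zero => intro x hx; simpa using (Nat.mod_eq_of_lt (by omega)).symm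
    | succ m ih =>
      intro x hx
      have hstep : (p ^ (2 * (m + 1))) x = (p ^ (2 * m)) (p (p x)) := by
        rw [show 2 * (m + 1) = 2 * m + 1 + 1 by ring, pow_succ, pow_succ,
          Equiv.Perm.mul_apply, Equiv.Perm.mul_apply]
      rw [hstep]
      have hlt : ((p (p x)) : ℕ) < a := by rw [hsq x hx]; exact Nat.mod_lt _ ha
      rw [ih _ hlt, hsq x hx, Nat.mod_add_mod]
      congr 1
      ring
  -- use cyclicity to send 0 to 1
  have hx0 : (0:ℕ) < n := by omega
  have hx1 : (1:ℕ) < n := by omega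
  obtain ⟨m, hm⟩ := hcyc ⟨0, hx0⟩ ⟨1, hx1⟩
  rcases Nat.even_or_odd m with ⟨k, hk⟩ | ⟨k, hk⟩
  · -- m = 2k : (k*b) % a = 1
    have h1 : ((k * b) % a) = 1 := by
      have := hiter k ⟨0, hx0⟩ (by simpa using ha)
      rw [show 2 * k = m by omega, hm] at this
      simpa using this.symm
    have hd : Nat.gcd b a ∣ 1 := by
      rw [← h1]
      rw [Nat.dvd_mod_iff (Nat.gcd_dvd_right b a)]
      exact Dvd.dvd.mul_left (Nat.gcd_dvd_left b a) k
    have : Nat.gcd b a = 1 := Nat.eq_one_of_dvd_one hd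
    rw [haeq] at this
    simpa [Nat.gcd_add_self_left] using this
  · -- m = 2k+1 : impossible, odd powers land in the top half
    exfalso
    have hval : (((p ^ (2 * k)) (⟨0, hx0⟩ : Fin n)) : ℕ) < a := by
      rw [hiter k ⟨0, hx0⟩ (by simpa using ha)]
      exact Nat.mod_lt _ ha
    have hstep : (p ^ m) (⟨0, hx0⟩ : Fin n) = p ((p ^ (2 * k)) ⟨0, hx0⟩) := by
      rw [show m = 2 * k + 1 by omega, pow_succ', Equiv.Perm.mul_apply]
    have := hbot _ hval
    rw [← hstep, hm] at this
    simp at this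
    omega
end

section
/- For positive integers a, b, c with a+b+c=n and b ≤ c, let p(a,b,c) be the permutation defined by p_i = n+1-i for 1 ≤ i ≤ a, p_i = a+b+1-i for a+1 ≤ i ≤ a+b, and p_i = n+b+1-i for a+b+1 ≤ i ≤ n. If p(a,b,c) is a cyclic permutation, then: if n is even, a = n/2 or a = n/2 - 1; if n is odd, a = (n-1)/2. -/
private lemma half_mod {T i : ℕ} (hT : 0 < T) (h2i : T ∣ 2 * i) (hi : ¬ T ∣ i) :
    2 * (i % T) = T := by
  have hdm := Nat.div_add_mod i T
  have h2 : T ∣ T * (2 * (i / T)) := Dvd.intro _ rfl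
  have h3 : 2 * (i % T) = 2 * i - T * (2 * (i / T)) := by
    have h4 : T * (2 * (i / T)) = 2 * (T * (i / T)) := by ring
    omega
  have h1 : T ∣ 2 * (i % T) := by rw [h3]; exact Nat.dvd_sub h2i h2
  have hrpos : i % T ≠ 0 := fun h => hi (Nat.dvd_of_mod_eq_zero h)
  have hrlt : i % T < T := Nat.mod_lt _ hT
  have hTle : T ≤ 2 * (i % T) := Nat.le_of_dvd (by omega) h1
  obtain ⟨w, hw⟩ := h1
  have hb1 : T * 1 ≤ T * w := by omega
  have hw1 : 1 ≤ w := Nat.le_of_mul_le_mul_left hb1 hT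
  have hb2 : T * w < T * 2 := by omega
  have hw2 : w < 2 := Nat.lt_of_mul_lt_mul_left hb2
  have hww : w = 1 := by omega
  subst hww
  omega

private lemma dvd_add_of_half {T i j : ℕ} (hT : 0 < T) (h2i : T ∣ 2 * i) (hi : ¬ T ∣ i)
    (h2j : T ∣ 2 * j) (hj : ¬ T ∣ j) : T ∣ i + j := by
  have a1 := half_mod hT h2i hi
  have a2 := half_mod hT h2j hj
  have hmod : (i + j) % T = 0 := by
    have hs : i % T + j % T = T := by omega
    rw [Nat.add_mod, hs, Nat.mod_self]
  exact Nat.dvd_of_mod_eq_zero hmod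

private lemma no_three_fixed {α : Type*} (q : Equiv.Perm α) (S : α → α)
    (hSq : ∀ u, S (q u) = q⁻¹ (S u))
    (htr : ∀ u v : α, ∃ k : ℕ, (q ^ k) u = v)
    {x y z : α} (hx : S x = x) (hy : S y = y) (hz : S z = z)
    (hxy : x ≠ y) (hxz : x ≠ z) (hyz : y ≠ z) : False := by
  have hSpow : ∀ (t : ℕ) (u : α), S ((q ^ t) u) = (q⁻¹ ^ t) (S u) := by
    intro t
    induction t with
    | zero => intro u; simp
    | succ t ih =>
      intro u
      have e1 : (q ^ (t + 1)) u = (q ^ t) (q u) := by rw [pow_succ, Equiv.Perm.mul_apply]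
      rw [e1, ih, hSq, ← Equiv.Perm.mul_apply, ← pow_succ]
  have key : ∀ (t : ℕ) (w : α), S w = w → (q ^ t) x = w → (q ^ (2 * t)) x = x := by
    intro t w hw ht
    have h1 : w = (q⁻¹ ^ t) x := by
      have h0 := hSpow t x
      rw [ht, hw, hx] at h0
      exact h0
    have h2 : (q ^ t) w = x := by rw [h1, inv_pow]; exact Equiv.apply_symm_apply _ _
    rw [two_mul, pow_add, Equiv.Perm.mul_apply, ht, h2]
  obtain ⟨i, hi⟩ := htr x y
  obtain ⟨j, hj⟩ := htr x z
  have hi0 : i ≠ 0 := by rintro rfl; exact hxy (by simpa using hi)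
  have hj0 : j ≠ 0 := by rintro rfl; exact hxz (by simpa using hj)
  have h2i := key i y hy hi
  have h2j := key j z hz hj
  have hpt2i : Function.IsPeriodicPt (⇑q) (2 * i) x := by
    show (⇑q)^[2 * i] x = x
    rw [Equiv.Perm.iterate_eq_pow]; exact h2i
  have hpt2j : Function.IsPeriodicPt (⇑q) (2 * j) x := by
    show (⇑q)^[2 * j] x = x
    rw [Equiv.Perm.iterate_eq_pow]; exact h2j
  have hTpos : 0 < Function.minimalPeriod (⇑q) x :=
    Function.IsPeriodicPt.minimalPeriod_pos (by omega) hpt2i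
  have hndi : ¬ Function.minimalPeriod (⇑q) x ∣ i := by
    intro hd
    have h5 : Function.IsPeriodicPt (⇑q) i x := Function.isPeriodicPt_iff_minimalPeriod_dvd.mpr hd
    have h6 : (q ^ i) x = x := by rw [← Equiv.Perm.iterate_eq_pow]; exact h5
    exact hxy (by rw [← hi, h6])
  have hndj : ¬ Function.minimalPeriod (⇑q) x ∣ j := by
    intro hd
    have h5 : Function.IsPeriodicPt (⇑q) j x := Function.isPeriodicPt_iff_minimalPeriod_dvd.mpr hd
    have h6 : (q ^ j) x = x := by rw [← Equiv.Perm.iterate_eq_pow]; exact h5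
    exact hxz (by rw [← hj, h6])
  have hdij : Function.minimalPeriod (⇑q) x ∣ i + j :=
    dvd_add_of_half hTpos hpt2i.minimalPeriod_dvd hndi hpt2j.minimalPeriod_dvd hndj
  have hptij : (q ^ (i + j)) x = x := by
    have h5 : Function.IsPeriodicPt (⇑q) (i + j) x :=
      Function.isPeriodicPt_iff_minimalPeriod_dvd.mpr hdij
    rw [← Equiv.Perm.iterate_eq_pow]; exact h5
  have e1 : (q ^ (i + 2 * j)) x = y := by
    rw [pow_add, Equiv.Perm.mul_apply, h2j, hi]
  have e2 : (q ^ (i + 2 * j)) x = z := by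
    rw [show i + 2 * j = j + (i + j) by ring, pow_add, Equiv.Perm.mul_apply, hptij, hj]
  exact hyz (by rw [← e1, e2])

theorem stmt7 (n a b c : ℕ) (ha : 0 < a) (hb : 0 < b) (hc : 0 < c)
    (hbc : b ≤ c) (habc : a + b + c = n) (p : Equiv.Perm (Fin n))
    (hp : IsTriplePerm n a b p) (hcyc : IsCyclicPerm p) :
    (Even n → a = n / 2 ∨ a = n / 2 - 1) ∧ (Odd n → a = (n - 1) / 2) := by
  -- Part 1: a ≤ b + c
  have ham : a ≤ b + c := by
    by_contra hcon
    push_neg at hcon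
    set x0 : Fin n := ⟨b + c, by omega⟩ with hx0def
    have key : ∀ k : ℕ, b + c ≤ ((p ^ k) x0 : ℕ) ∧ ((p ^ k) x0 : ℕ) < a := by
      intro k
      induction k with
      | zero =>
        have h0 : (p ^ 0) x0 = x0 := by simp
        rw [h0, hx0def]
        exact ⟨Nat.le_refl _, hcon⟩
      | succ k ih =>
        have hrw : (p ^ (k + 1)) x0 = p ((p ^ k) x0) := by
          rw [pow_succ', Equiv.Perm.mul_apply]
        have h1 := hp ((p ^ k) x0)
        rw [if_pos (show ((p ^ k) x0 : ℕ) < a from ih.2)] at h1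
        rw [hrw]
        omega
    have hn0 : 0 < n := by omega
    obtain ⟨k, hk⟩ := hcyc x0 ⟨0, hn0⟩
    have h2 := key k
    rw [hk] at h2
    have h3 : ((⟨0, hn0⟩ : Fin n) : ℕ) = 0 := rfl
    omega
  -- Part 2: b + c ≤ a + 2
  have hm2 : b + c ≤ a + 2 := by
    by_contra hcon
    push_neg at hcon
    set M := b + c with hM
    haveI : NeZero M := ⟨by omega⟩
    set K : ZMod M := ((a + b - 1 : ℕ) : ZMod M) with hK
    have hRinv : Function.Involutive (fun u : ZMod M => K - u) := fun u => sub_sub_cancel _ _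
    set Sf : ZMod M → ZMod M :=
      fun v => if v.val < a then ((a - 1 - v.val : ℕ) : ZMod M) else v with hSf
    have hSf_lt : ∀ v : ZMod M, v.val < a → Sf v = ((a - 1 - v.val : ℕ) : ZMod M) := by
      intro v hv; simp only [hSf]; rw [if_pos hv]
    have hSf_ge : ∀ v : ZMod M, ¬ v.val < a → Sf v = v := by
      intro v hv; simp only [hSf]; rw [if_neg hv]
    have hSinv : Function.Involutive Sf := by
      intro v
      by_cases hv : v.val < a
      · rw [hSf_lt v hv]
        have hval : (((a - 1 - v.val : ℕ) : ZMod M)).val = a - 1 - v.val :=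
          ZMod.val_cast_of_lt (by omega)
        rw [hSf_lt _ (by rw [hval]; omega), hval]
        have hvv : a - 1 - (a - 1 - v.val) = v.val := by omega
        rw [hvv, ZMod.natCast_val, ZMod.cast_id]
      · rw [hSf_ge v hv, hSf_ge v hv]
    set q : Equiv.Perm (ZMod M) :=
      (Function.Involutive.toPerm _ hRinv).trans (Function.Involutive.toPerm _ hSinv) with hqdef
    have hq_apply : ∀ u, q u = Sf (K - u) := by intro u; rw [hqdef]; rfl
    have hq_inv : ∀ u, q⁻¹ u = K - Sf u := by intro u; rw [hqdef]; rfl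
    have hSq : ∀ u, Sf (q u) = q⁻¹ (Sf u) := by
      intro u
      rw [hq_apply, hq_inv, hSinv, hSinv]
    -- the step lemma
    have hstep : ∀ x : Fin n, a ≤ (x : ℕ) →
        (a ≤ (p x : ℕ) ∧ q (((x : ℕ) : ZMod M)) = (((p x : ℕ)) : ZMod M)) ∨
        ((p x : ℕ) < a ∧ a ≤ (p (p x) : ℕ) ∧
          q (((x : ℕ) : ZMod M)) = (((p (p x) : ℕ)) : ZMod M)) := by
      intro x hx
      have hxn := x.isLt
      have hcast : (((p x : ℕ)) : ZMod M) = K - ((x : ℕ) : ZMod M) ∧ (p x : ℕ) < M := by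
        have h1 := hp x
        rw [if_neg (by omega)] at h1
        by_cases h2 : (x : ℕ) < a + b
        · rw [if_pos h2] at h1
          constructor
          · rw [h1, Nat.cast_sub (by omega : (x : ℕ) ≤ a + b - 1), hK]
          · omega
        · rw [if_neg h2] at h1
          constructor
          · rw [h1, Nat.cast_sub (by omega : (x : ℕ) ≤ n + b - 1)]
            have hc2 : ((n + b - 1 : ℕ) : ZMod M) = K := by
              rw [hK]
              rw [show n + b - 1 = (a + b - 1) + M by omega, Nat.cast_add,
                ZMod.natCast_self, add_zero]
            rw [hc2]
          · omega
      obtain ⟨hc, hplt⟩ := hcast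
      have hval : ((((p x : ℕ)) : ZMod M)).val = (p x : ℕ) := ZMod.val_cast_of_lt hplt
      by_cases hpa : (p x : ℕ) < a
      · right
        have h1 := hp (p x)
        rw [if_pos hpa] at h1
        refine ⟨hpa, by omega, ?_⟩
        rw [hq_apply, ← hc, hSf_lt _ (by rw [hval]; omega), hval, h1]
        rw [show n - 1 - (p x : ℕ) = (a - 1 - (p x : ℕ)) + M by omega, Nat.cast_add,
          ZMod.natCast_self, add_zero]
      · left
        refine ⟨by omega, ?_⟩
        rw [hq_apply, ← hc]
        exact hSf_ge _ (by rw [hval]; omega)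
    -- main claim: orbit transfer
    have hmain : ∀ k : ℕ, ∀ x : Fin n, a ≤ (x : ℕ) → a ≤ ((p ^ k) x : ℕ) →
        ∃ j : ℕ, (q ^ j) (((x : ℕ) : ZMod M)) = ((((p ^ k) x : ℕ)) : ZMod M) := by
      intro k
      induction k using Nat.strong_induction_on with
      | _ k ih =>
        intro x hx hk1
        rcases k with _ | k
        · exact ⟨0, by simp⟩
        · rcases hstep x hx with ⟨h1, h2⟩ | ⟨h1, h2, h3⟩
          · have hrw : (p ^ (k + 1)) x = (p ^ k) (p x) := by
              rw [pow_succ, Equiv.Perm.mul_apply]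
            obtain ⟨j, hj⟩ := ih k (by omega) (p x) h1 (by rw [← hrw]; exact hk1)
            refine ⟨j + 1, ?_⟩
            rw [hrw, pow_succ, Equiv.Perm.mul_apply, h2, hj]
          · rcases k with _ | k
            · exfalso
              simp only [zero_add, pow_one] at hk1
              omega
            · have hrw : (p ^ (k + 1 + 1)) x = (p ^ k) (p (p x)) := by
                rw [pow_succ, pow_succ, Equiv.Perm.mul_apply, Equiv.Perm.mul_apply]
              obtain ⟨j, hj⟩ := ih k (by omega) (p (p x)) h2 (by rw [← hrw]; exact hk1)
              refine ⟨j + 1, ?_⟩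
              rw [hrw, pow_succ, Equiv.Perm.mul_apply, h3, hj]
    -- transitivity of q
    have htr : ∀ U V : ZMod M, ∃ j : ℕ, (q ^ j) U = V := by
      intro U V
      have hvU : (U - ((a : ℕ) : ZMod M)).val < M := ZMod.val_lt _
      have hvV : (V - ((a : ℕ) : ZMod M)).val < M := ZMod.val_lt _
      have hcastgen : ∀ W : ZMod M,
          (((a + (W - ((a : ℕ) : ZMod M)).val : ℕ)) : ZMod M) = W := by
        intro W
        push_cast [ZMod.natCast_val, ZMod.cast_id]
        ring
      obtain ⟨k, hk⟩ := hcyc ⟨a + (U - ((a : ℕ) : ZMod M)).val, by omega⟩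
        ⟨a + (V - ((a : ℕ) : ZMod M)).val, by omega⟩
      obtain ⟨j, hj⟩ := hmain k ⟨a + (U - ((a : ℕ) : ZMod M)).val, by omega⟩
        (Nat.le_add_right _ _) (by rw [hk]; exact Nat.le_add_right _ _)
      rw [hk] at hj
      refine ⟨j, ?_⟩
      have e1 := hcastgen U
      have e2 := hcastgen V
      rw [show ((⟨a + (U - ((a : ℕ) : ZMod M)).val, by omega⟩ : Fin n) : ℕ)
          = a + (U - ((a : ℕ) : ZMod M)).val from rfl] at hj
      rw [show ((⟨a + (V - ((a : ℕ) : ZMod M)).val, by omega⟩ : Fin n) : ℕ)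
          = a + (V - ((a : ℕ) : ZMod M)).val from rfl] at hj
      rw [e1, e2] at hj
      exact hj
    -- three distinct fixed points of Sf
    have hfix : ∀ w : ℕ, a ≤ w → w < M → Sf ((w : ℕ) : ZMod M) = ((w : ℕ) : ZMod M) := by
      intro w h1 h2
      exact hSf_ge _ (by rw [ZMod.val_cast_of_lt h2]; omega)
    have hne : ∀ w1 w2 : ℕ, w1 < M → w2 < M → w1 ≠ w2 →
        ((w1 : ℕ) : ZMod M) ≠ ((w2 : ℕ) : ZMod M) := by
      intro w1 w2 hw1 hw2 hne heq
      have := congrArg ZMod.val heq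
      rw [ZMod.val_cast_of_lt hw1, ZMod.val_cast_of_lt hw2] at this
      exact hne this
    exact no_three_fixed q Sf hSq htr
      (hfix a (Nat.le_refl _) (by omega))
      (hfix (a + 1) (by omega) (by omega))
      (hfix (a + 2) (by omega) (by omega))
      (hne a (a + 1) (by omega) (by omega) (by omega))
      (hne a (a + 2) (by omega) (by omega) (by omega))
      (hne (a + 1) (a + 2) (by omega) (by omega) (by omega))
  constructor
  · intro he
    rw [Nat.even_iff] at he
    omega
  · intro ho
    rw [Nat.odd_iff] at ho
    omega
end

section
/- Let a = b + c = n/2 with b and c positive integers that are relatively prime. Then the permutation p(a,b,c) of length n defined by p_i = n+1-i for 1 ≤ i ≤ a, p_i = a+b+1-i for a+1 ≤ i ≤ a+b, and p_i = n+b+1-i for a+b+1 ≤ i ≤ n, is a cyclic permutation. -/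
lemma reach_symm {n : ℕ} (p : Equiv.Perm (Fin n)) {x y : Fin n}
    (h : ∃ m : ℕ, (p ^ m) x = y) : ∃ m : ℕ, (p ^ m) y = x := by
  obtain ⟨m, hm⟩ := h
  obtain ⟨o, ho⟩ : ∃ o, orderOf p = o + 1 := ⟨orderOf p - 1, by have := orderOf_pos p; omega⟩
  refine ⟨m * o, ?_⟩
  rw [← hm, ← Equiv.Perm.mul_apply, ← pow_add]
  have h2 : m * o + m = orderOf p * m := by rw [ho]; ring
  rw [h2, pow_mul, pow_orderOf_eq_one, one_pow, Equiv.Perm.one_apply]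

theorem stmt9 (n a b c : ℕ) (hb : 0 < b) (hc : 0 < c)
    (hcop : Nat.gcd b c = 1) (haeq : a = b + c) (habc : a + b + c = n) :
    ∃ p : Equiv.Perm (Fin n), IsTriplePerm n a b p ∧ IsCyclicPerm p := by
  have hn : 0 < n := by omega
  set f : Fin n → Fin n := fun i =>
    ⟨if (i : ℕ) < a then n - 1 - (i : ℕ)
      else if (i : ℕ) < a + b then a + b - 1 - (i : ℕ)
      else n + b - 1 - (i : ℕ), by have := i.isLt; split_ifs <;> omega⟩ with hf
  have hinj : Function.Injective f := by
    intro i j hij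
    have hi := i.isLt
    have hj := j.isLt
    rw [hf] at hij
    simp only [Fin.mk.injEq] at hij
    apply Fin.ext
    split_ifs at hij <;> omega
  let p : Equiv.Perm (Fin n) := Equiv.ofBijective f (Finite.injective_iff_bijective.mp hinj)
  have hp : ∀ i : Fin n, (p i : ℕ) =
      if (i : ℕ) < a then n - 1 - (i : ℕ)
      else if (i : ℕ) < a + b then a + b - 1 - (i : ℕ)
      else n + b - 1 - (i : ℕ) := fun i => rfl
  refine ⟨p, hp, ?_⟩
  -- key step: p^2 on the left half is +b mod a
  have hp2 : ∀ x : Fin n, (x : ℕ) < a →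
      ((p ^ 2) x : ℕ) = if (x : ℕ) + b < a then (x : ℕ) + b else (x : ℕ) + b - a := by
    intro x hx
    have h2 : (p ^ 2) x = p (p x) := by rw [pow_two, Equiv.Perm.mul_apply]
    rw [h2, hp (p x), hp x]
    split_ifs <;> omega
  have z0 : Fin n := ⟨0, hn⟩
  haveI : NeZero a := ⟨by omega⟩
  have hiter : ∀ k : ℕ, ((p ^ (2 * k)) ⟨0, hn⟩ : ℕ) < a ∧
      ((((p ^ (2 * k)) ⟨0, hn⟩ : ℕ) : ZMod a) = (k : ZMod a) * (b : ZMod a)) := by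
    intro k
    induction k with
    | zero => simp; omega
    | succ k ih =>
      obtain ⟨ih1, ih2⟩ := ih
      have hstep : (p ^ (2 * (k + 1))) ⟨0, hn⟩ = (p ^ 2) ((p ^ (2 * k)) ⟨0, hn⟩) := by
        rw [show 2 * (k + 1) = 2 + 2 * k by ring, pow_add, Equiv.Perm.mul_apply]
      rw [hstep, hp2 _ ih1]
      set t : ℕ := ((p ^ (2 * k)) ⟨0, hn⟩ : ℕ) with ht
      split_ifs with hcase
      · constructor
        · exact hcase
        · push_cast
          rw [ih2]; push_cast; ring
      · constructor
        · omega
        · have heq : t + b - a + a = t + b := by omega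
          have : ((t + b - a : ℕ) : ZMod a) = ((t + b : ℕ) : ZMod a) := by
            calc ((t + b - a : ℕ) : ZMod a)
                = ((t + b - a : ℕ) : ZMod a) + ((a : ℕ) : ZMod a) := by
                  rw [ZMod.natCast_self, add_zero]
              _ = (((t + b - a) + a : ℕ) : ZMod a) := by push_cast; ring
              _ = ((t + b : ℕ) : ZMod a) := by rw [heq]
          rw [this]; push_cast; rw [ih2]; push_cast; ring
  -- reach everything in the left half from 0
  have hcop' : Nat.Coprime b a := by
    rw [haeq, Nat.Coprime, Nat.add_comm, Nat.gcd_add_self_right]; exact hcop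
  have hleft : ∀ y : Fin n, (y : ℕ) < a → ∃ m : ℕ, (p ^ m) ⟨0, hn⟩ = y := by
    intro y hy
    set u : (ZMod a)ˣ := ZMod.unitOfCoprime b hcop' with hu
    set k : ℕ := (((y : ℕ) : ZMod a) * ↑u⁻¹).val with hk
    have hkz : ((k : ℕ) : ZMod a) = ((y : ℕ) : ZMod a) * ↑u⁻¹ :=
      ZMod.natCast_rightInverse _
    obtain ⟨h1, h2⟩ := hiter k
    have hub : (↑u : ZMod a) = (b : ℕ) := ZMod.coe_unitOfCoprime b hcop'
    have h3 : (((p ^ (2 * k)) ⟨0, hn⟩ : ℕ) : ZMod a) = ((y : ℕ) : ZMod a) := by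
      rw [h2, hkz, ← hub]
      rw [mul_assoc, Units.inv_mul, mul_one]
    refine ⟨2 * k, Fin.ext ?_⟩
    have hv1 := ZMod.val_cast_of_lt (n := a) h1
    have hv2 := ZMod.val_cast_of_lt (n := a) hy
    calc ((p ^ (2 * k)) ⟨0, hn⟩ : ℕ)
        = ((((p ^ (2 * k)) ⟨0, hn⟩ : ℕ) : ZMod a)).val := hv1.symm
      _ = (((y : ℕ) : ZMod a)).val := by rw [h3]
      _ = (y : ℕ) := hv2
  -- reach everything from 0
  have hfrom0 : ∀ y : Fin n, ∃ m : ℕ, (p ^ m) ⟨0, hn⟩ = y := by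
    intro y
    by_cases hy : (y : ℕ) < a
    · exact hleft y hy
    · have hx' : n - 1 - (y : ℕ) < n := by omega
      have hxa : ((⟨n - 1 - (y : ℕ), hx'⟩ : Fin n) : ℕ) < a := by have := y.isLt; simp; omega
      obtain ⟨m, hm⟩ := hleft ⟨n - 1 - (y : ℕ), hx'⟩ hxa
      refine ⟨m + 1, ?_⟩
      rw [pow_succ', Equiv.Perm.mul_apply, hm]
      apply Fin.ext
      rw [hp]
      have := y.isLt
      split_ifs <;> simp <;> omega
  intro x y
  obtain ⟨m1, hm1⟩ := reach_symm p (hfrom0 x)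
  obtain ⟨m2, hm2⟩ := hfrom0 y
  exact ⟨m2 + m1, by rw [pow_add, Equiv.Perm.mul_apply, hm1, hm2]⟩
end

section
/- Let a, b, c be positive integers with a = b + c - 1, a ≥ c ≥ b, and gcd(b,c) = 1, and let n = a + b + c. Then the permutation p(a,b,c) of length n defined by p_i = n+1-i for 1 ≤ i ≤ a, p_i = a+b+1-i for a+1 ≤ i ≤ a+b, and p_i = n+b+1-i for a+b+1 ≤ i ≤ n, is a cyclic permutation. -/
/-- helper: mod for arguments below `2*k`. -/
lemma mod2' {x k : ℕ} (hk : 0 < k) (h : x < 2 * k) : x % k = x ∨ x % k + k = x := by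
  rcases Nat.lt_or_ge x k with h' | h'
  · left; exact Nat.mod_eq_of_lt h'
  · right
    rw [Nat.mod_eq_sub_mod h', Nat.mod_eq_of_lt (by omega)]
    omega

def triple (a c : ℕ) (i : ℕ) : ℕ :=
  if i < a then 2 * a - i else a - ((i - a + c) % (a + 1))

def tripleInv (a c : ℕ) (j : ℕ) : ℕ :=
  if a < j then 2 * a - j else a + ((2 * a + 1 - c - j) % (a + 1))

lemma triple_lt (a c i : ℕ) : triple a c i ≤ 2 * a := by
  unfold triple; split <;> omega

lemma tripleInv_lt (a c j : ℕ) : tripleInv a c j ≤ 2 * a := by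
  unfold tripleInv
  split
  · omega
  · have := Nat.mod_lt (2 * a + 1 - c - j) (y := a + 1) (by omega)
    omega

lemma tripleInv_triple (a c : ℕ) (hc : 0 < c) (hca : c ≤ a) {i : ℕ} (hi : i ≤ 2 * a) :
    tripleInv a c (triple a c i) = i := by
  unfold triple tripleInv
  rcases Nat.lt_or_ge i a with h | h
  · rw [if_pos h, if_pos (show a < 2 * a - i by omega)]
    omega
  · rw [if_neg (show ¬ i < a by omega)]
    have hz1 : (i - a + c) % (a + 1) < a + 1 := Nat.mod_lt _ (by omega)
    have hz2 := mod2' (x := i - a + c) (k := a + 1) (by omega) (by omega)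
    rw [if_neg (show ¬ a < a - (i - a + c) % (a + 1) by omega)]
    have harg : 2 * a + 1 - c - (a - (i - a + c) % (a + 1))
        = a + 1 - c + (i - a + c) % (a + 1) := by omega
    rw [harg]
    have hw1 : (a + 1 - c + (i - a + c) % (a + 1)) % (a + 1) < a + 1 := Nat.mod_lt _ (by omega)
    have hw2 := mod2' (x := a + 1 - c + (i - a + c) % (a + 1)) (k := a + 1) (by omega) (by omega)
    omega

lemma triple_tripleInv (a c : ℕ) (hc : 0 < c) (hca : c ≤ a) {j : ℕ} (hj : j ≤ 2 * a) :
    triple a c (tripleInv a c j) = j := by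
  unfold triple tripleInv
  rcases Nat.lt_or_ge a j with h | h
  · rw [if_pos h, if_pos (show 2 * a - j < a by omega)]
    omega
  · rw [if_neg (show ¬ a < j by omega)]
    have hw1 : (2 * a + 1 - c - j) % (a + 1) < a + 1 := Nat.mod_lt _ (by omega)
    have hw2 := mod2' (x := 2 * a + 1 - c - j) (k := a + 1) (by omega) (by omega)
    rw [if_neg (show ¬ a + (2 * a + 1 - c - j) % (a + 1) < a by omega)]
    have harg : a + (2 * a + 1 - c - j) % (a + 1) - a + c
        = (2 * a + 1 - c - j) % (a + 1) + c := by omega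
    rw [harg]
    have hv1 : ((2 * a + 1 - c - j) % (a + 1) + c) % (a + 1) < a + 1 := Nat.mod_lt _ (by omega)
    have hv2 := mod2' (x := (2 * a + 1 - c - j) % (a + 1) + c) (k := a + 1) (by omega) (by omega)
    omega

/-- applying `triple` to a point `a + y` of the top block, where `y = (k*c) % (a+1)`. -/
lemma triple_odd (a c k : ℕ) (hc : 0 < c) (hca : c ≤ a) :
    triple a c (a + (k * c) % (a + 1)) = a - ((k + 1) * c) % (a + 1) := by
  unfold triple
  rw [if_neg (by omega)]
  have h1 : a + k * c % (a + 1) - a + c = k * c % (a + 1) + c := by omega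
  rw [h1, Nat.mod_add_mod]
  ring_nf

lemma exists_k (a c : ℕ) (hcop : Nat.Coprime c (a + 1)) {d : ℕ} (hd : d ≤ a) :
    ∃ k ≤ a, (k * c) % (a + 1) = d := by
  haveI : NeZero (a + 1) := ⟨Nat.succ_ne_zero a⟩
  set u := ZMod.unitOfCoprime c hcop with hu
  set e : ZMod (a + 1) := ((u⁻¹ : (ZMod (a + 1))ˣ) : ZMod (a + 1)) * (d : ZMod (a + 1)) with he
  refine ⟨e.val, by have := ZMod.val_lt e; omega, ?_⟩
  have hcast : ((e.val * c : ℕ) : ZMod (a + 1)) = (d : ZMod (a + 1)) := by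
    push_cast
    rw [ZMod.natCast_val, ZMod.cast_id, he]
    have hcu : (c : ZMod (a + 1)) = (u : ZMod (a + 1)) := (ZMod.coe_unitOfCoprime c hcop).symm
    rw [hcu, mul_assoc, mul_comm ((d : ZMod (a+1))) (u : ZMod (a+1)), ← mul_assoc,
      Units.inv_mul, one_mul]
  have := congrArg ZMod.val hcast
  rwa [ZMod.val_natCast, ZMod.val_natCast, Nat.mod_eq_of_lt (show d < a + 1 by omega)] at this

theorem stmt10 (n a b c : ℕ) (ha : 0 < a) (hb : 0 < b) (hc : 0 < c)
    (haeq : a + 1 = b + c) (hca : c ≤ a) (hbc : b ≤ c)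
    (hcop : Nat.gcd b c = 1) (hn : n = a + b + c) :
    ∃ p : Equiv.Perm (Fin n), IsTriplePerm n a b p ∧ IsCyclicPerm p := by
  subst hn
  have hn2 : a + b + c = 2 * a + 1 := by omega
  obtain ⟨p, hp⟩ : ∃ p : Equiv.Perm (Fin (a + b + c)),
      ∀ i : Fin (a + b + c), (p i : ℕ) = triple a c (i : ℕ) := by
    refine ⟨⟨fun i => ⟨triple a c i, by have := triple_lt a c (i : ℕ); omega⟩,
      fun j => ⟨tripleInv a c j, by have := tripleInv_lt a c (j : ℕ); omega⟩, ?_, ?_⟩, fun i => rfl⟩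
    · intro i
      apply Fin.ext
      exact tripleInv_triple a c hc hca (by have := i.isLt; omega)
    · intro j
      apply Fin.ext
      exact triple_tripleInv a c hc hca (by have := j.isLt; omega)
  have hcop' : Nat.Coprime c (a + 1) := by
    have h1 : Nat.Coprime c b := Nat.Coprime.symm hcop
    have h2 : Nat.Coprime c (b + c) := Nat.coprime_add_self_right.mpr h1
    rwa [← haeq] at h2
  refine ⟨p, ?_, ?_⟩
  · -- IsTriplePerm
    intro i
    rw [hp]
    have hi := i.isLt
    unfold triple
    rcases Nat.lt_or_ge (i : ℕ) a with h | h
    · rw [if_pos h, if_pos h]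
      omega
    · rw [if_neg (by omega)]
      have hz1 : ((i : ℕ) - a + c) % (a + 1) < a + 1 := Nat.mod_lt _ (by omega)
      have hz2 := mod2' (x := (i : ℕ) - a + c) (k := a + 1) (by omega) (by omega)
      rw [if_neg (by omega)]
      split <;> omega
  · -- IsCyclicPerm
    set A : Fin (a + b + c) := ⟨a, by omega⟩ with hA
    have happ : ∀ (x : Fin (a + b + c)) (m : ℕ),
        ((p ^ (m + 1)) x : ℕ) = triple a c (((p ^ m) x : ℕ)) := by
      intro x m
      rw [pow_succ', Equiv.Perm.mul_apply, hp]
    -- the key orbit computation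
    have key : ∀ k, k ≤ a → (((p ^ (2 * k)) A : ℕ)) = a + (k * c) % (a + 1) := by
      intro k
      induction k with
      | zero => intro _; simp [hA]
      | succ k ih =>
        intro hk
        have ih' := ih (by omega)
        have e1 : 2 * (k + 1) = 2 * k + 1 + 1 := by ring
        rw [e1, happ, happ, ih', triple_odd a c k hc hca]
        -- now : triple a c (a - ((k+1)*c)%(a+1)) = a + ((k+1)*c)%(a+1)
        have hz0 : ((k + 1) * c) % (a + 1) ≠ 0 := by
          intro h0
          have hdvd : (a + 1) ∣ (k + 1) * c := Nat.dvd_of_mod_eq_zero h0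
          have : (a + 1) ∣ (k + 1) :=
            (Nat.Coprime.dvd_of_dvd_mul_right (Nat.Coprime.symm hcop') hdvd)
          have := Nat.le_of_dvd (by omega) this
          omega
        have hz1 : ((k + 1) * c) % (a + 1) < a + 1 := Nat.mod_lt _ (by omega)
        unfold triple
        rw [if_pos (by omega)]
        omega
    -- every point is in the orbit of A
    have surj : ∀ x : Fin (a + b + c), ∃ m : ℕ, (p ^ m) A = x := by
      intro x
      have hx := x.isLt
      rcases Nat.lt_or_ge (x : ℕ) a with h | h
      · -- x = a - z with z = a - x ∈ [1, a]
        obtain ⟨k', hk', hk'e⟩ := exists_k a c hcop' (d := a - (x : ℕ)) (by omega)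
        have hk'0 : k' ≠ 0 := by
          intro h0
          rw [h0] at hk'e
          simp at hk'e
          omega
        refine ⟨2 * (k' - 1) + 1, ?_⟩
        apply Fin.ext
        rw [happ, key (k' - 1) (by omega), triple_odd a c (k' - 1) hc hca]
        have : k' - 1 + 1 = k' := by omega
        rw [this, hk'e]
        omega
      · obtain ⟨k', hk', hk'e⟩ := exists_k a c hcop' (d := (x : ℕ) - a) (by omega)
        refine ⟨2 * k', ?_⟩
        apply Fin.ext
        rw [key k' hk', hk'e]
        omega
    -- conclude transitivity
    intro x y
    obtain ⟨mx, hx⟩ := surj x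
    obtain ⟨my, hy⟩ := surj y
    set N := orderOf p with hN
    have hNpos : 0 < N := orderOf_pos p
    have hx' : (p ^ (mx % N)) A = x := by rw [pow_mod_orderOf]; exact hx
    refine ⟨my + (N - mx % N), ?_⟩
    have hmod : mx % N < N := Nat.mod_lt _ hNpos
    calc (p ^ (my + (N - mx % N))) x
        = (p ^ my) ((p ^ (N - mx % N)) x) := by rw [pow_add, Equiv.Perm.mul_apply]
      _ = (p ^ my) ((p ^ (N - mx % N)) ((p ^ (mx % N)) A)) := by rw [hx']
      _ = (p ^ my) ((p ^ (N - mx % N + mx % N)) A) := by rw [pow_add, Equiv.Perm.mul_apply]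
      _ = (p ^ my) ((p ^ N) A) := by rw [Nat.sub_add_cancel (le_of_lt hmod)]
      _ = (p ^ my) A := by rw [pow_orderOf_eq_one]; rfl
      _ = y := hy
end

section
/- Let a, b, c be positive integers with a ≥ b, a ≥ c, a = 2K, b + c = 2K + 2, both b and c even, and gcd(b,c) = 2, and let n = a + b + c. Then the permutation p(a,b,c) defined by p_i = n+1-i for 1 ≤ i ≤ a, p_i = a+b+1-i for a+1 ≤ i ≤ a+b, and p_i = n+b+1-i for a+b+1 ≤ i ≤ n, is a cyclic permutation. -/
lemma mod_eval' {x M : ℕ} (hM : 0 < M) (h2 : x < 2 * M) :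
    x % M = if x < M then x else x - M := by
  split_ifs with h
  · exact Nat.mod_eq_of_lt h
  · rw [Nat.mod_eq_sub_mod (by omega), Nat.mod_eq_of_lt (by omega)]

lemma cycle_conn' (M g : ℕ) (hM : 0 < M) (hg : Nat.Coprime g M)
    (R : ℕ → ℕ → Prop)
    (Rrefl : ∀ u, u < M → R u u)
    (Rsymm : ∀ u v, R u v → R v u)
    (Rtrans : ∀ u v w, R u v → R v w → R u w)
    (v0 : ℕ) (hv0 : v0 < M)
    (hstep : ∀ u, u < M → u ≠ v0 → R u ((u + g) % M)) :
    ∀ u, u < M → ∀ v, v < M → R u v := by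
  haveI : NeZero M := ⟨hM.ne'⟩
  set w : ℕ → ℕ := fun k => (v0 + k * g) % M with hw
  have hw_lt : ∀ k, w k < M := fun k => Nat.mod_lt _ hM
  have hw_ne : ∀ k, 1 ≤ k → k < M → w k ≠ v0 := by
    intro k h1 h2 hEq
    have hr : (v0 + k * g % M) % M = v0 := by
      rw [Nat.add_mod_mod]; exact hEq
    have hrlt : k * g % M < M := Nat.mod_lt _ hM
    have hr0 : k * g % M = 0 := by
      rw [mod_eval' hM (by omega)] at hr
      split_ifs at hr <;> omega
    have hdvd : M ∣ k * g := Nat.dvd_of_mod_eq_zero hr0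
    have : M ∣ k := (Nat.Coprime.dvd_of_dvd_mul_right (hg.symm) hdvd)
    have := Nat.le_of_dvd (by omega) this
    omega
  have hwm : w M = v0 := by
    simp only [hw]
    rw [Nat.add_mul_mod_self_left, Nat.mod_eq_of_lt hv0]
  have hchain : ∀ k, 1 ≤ k → k ≤ M → R (w 1) (w k) := by
    intro k
    induction k with
    | zero => omega
    | succ k ih =>
      intro h1 h2
      rcases Nat.eq_or_lt_of_le h1 with h | h
      · rw [← h]; exact Rrefl _ (hw_lt 1)
      · have hk1 : 1 ≤ k := by omega
        have hkM : k < M := by omega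
        have ihk := ih hk1 (by omega)
        have hedge := hstep (w k) (hw_lt k) (hw_ne k hk1 hkM)
        have : (w k + g) % M = w (k + 1) := by
          simp only [hw]
          rw [Nat.mod_add_mod]
          ring_nf
        rw [this] at hedge
        exact Rtrans _ _ _ ihk hedge
  have hsurj : ∀ u, u < M → ∃ k, 1 ≤ k ∧ k ≤ M ∧ w k = u := by
    intro u hu
    set t : ZMod M := ((u : ZMod M) - (v0 : ZMod M)) * (g : ZMod M)⁻¹ with ht
    have hval : ∀ k0 : ℕ, (k0 : ZMod M) = t → w k0 = u := by
      intro k0 hk0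
      have hcast : ((v0 + k0 * g : ℕ) : ZMod M) = (u : ZMod M) := by
        push_cast
        rw [hk0, ht, mul_assoc, mul_comm ((g : ZMod M))⁻¹ (g : ZMod M),
          ZMod.coe_mul_inv_eq_one g hg, mul_one]
        ring
      have : (v0 + k0 * g) % M = u % M := by
        rw [← ZMod.val_natCast, ← ZMod.val_natCast (n := M) u, hcast]
      simpa [hw, Nat.mod_eq_of_lt hu] using this
    by_cases h0 : t = 0
    · refine ⟨M, by omega, le_refl _, ?_⟩
      rw [hwm]
      have := hval 0 (by simpa using h0.symm)
      simp only [hw] at this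
      have : u = v0 := by simpa [Nat.mod_eq_of_lt hv0] using this.symm
      omega
    · refine ⟨t.val, ?_, ?_, hval t.val (ZMod.natCast_zmod_val t)⟩
      · have : t.val ≠ 0 := fun h => h0 (by rwa [← ZMod.val_eq_zero])
        omega
      · exact le_of_lt (ZMod.val_lt t)
  intro u hu v hv
  obtain ⟨ku, hku1, hkuM, hwu⟩ := hsurj u hu
  obtain ⟨kv, hkv1, hkvM, hwv⟩ := hsurj v hv
  exact Rtrans _ _ _ (Rsymm _ _ (hwu ▸ hchain ku hku1 hkuM)) (hwv ▸ hchain kv hkv1 hkvM)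

theorem stmt11 (n a b c K : ℕ) (ha : 0 < a) (hb : 0 < b) (hc : 0 < c)
    (hba : b ≤ a) (hca : c ≤ a) (haK : a = 2 * K) (hbcK : b + c = 2 * K + 2)
    (hbe : Even b) (hce : Even c) (hgcd : Nat.gcd b c = 2) (hn : n = a + b + c) :
    ∃ p : Equiv.Perm (Fin n), IsTriplePerm n a b p ∧ IsCyclicPerm p := by
  obtain ⟨b2, hb2⟩ := hbe
  obtain ⟨c2, hc2⟩ := hce
  -- basic arithmetic facts
  have hb2' : b = 2 * b2 := by omega
  have hc2' : c = 2 * c2 := by omega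
  have hM : b2 + c2 = K + 1 := by omega
  have hb21 : 1 ≤ b2 := by omega
  have hc21 : 1 ≤ c2 := by omega
  have hb2K : b2 ≤ K := by omega
  have hc2K : c2 ≤ K := by omega
  have hK1 : 1 ≤ K := by omega
  have hnn : n = 2 * a + 2 := by omega
  -- coprimality
  have hcop : Nat.Coprime b2 c2 := by
    have h2 : Nat.gcd (2 * b2) (2 * c2) = 2 * Nat.gcd b2 c2 := Nat.gcd_mul_left 2 b2 c2
    rw [← hb2', ← hc2', hgcd] at h2
    unfold Nat.Coprime
    omega
  have hcopb : Nat.Coprime b2 (K + 1) := by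
    rw [← hM, add_comm b2 c2]
    exact Nat.coprime_add_self_right.mpr hcop
  have hcopc : Nat.Coprime c2 (K + 1) := by
    rw [← hM]
    exact Nat.coprime_add_self_right.mpr hcop.symm
  -- the permutation
  let F : Fin n → Fin n := fun i =>
    ⟨if (i : ℕ) < a then n - 1 - (i : ℕ)
     else if (i : ℕ) < a + b then a + b - 1 - (i : ℕ)
     else n + b - 1 - (i : ℕ), by
      have := i.isLt; split_ifs <;> omega⟩
  have hinj : Function.Injective F := by
    intro i j hij
    have hvv : (F i : ℕ) = (F j : ℕ) := congrArg Fin.val hij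
    have hi := i.isLt
    have hj := j.isLt
    simp only [F] at hvv
    apply Fin.ext
    split_ifs at hvv <;> omega
  let p : Equiv.Perm (Fin n) := Equiv.ofBijective F (Finite.injective_iff_bijective.mp hinj)
  have hp : IsTriplePerm n a b p := fun i => rfl
  refine ⟨p, hp, ?_⟩
  -- SameCycle machinery
  have hstep : ∀ x : Fin n, p.SameCycle x (p x) := fun x => ⟨1, by simp⟩
  set SCn : ℕ → ℕ → Prop :=
    fun u v => ∃ (hu : u < n) (hv : v < n), p.SameCycle ⟨u, hu⟩ ⟨v, hv⟩ with hSCn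
  have SCrefl : ∀ u, u < n → SCn u u := fun u hu => ⟨hu, hu, Equiv.Perm.SameCycle.refl p _⟩
  have SCsymm : ∀ u v, SCn u v → SCn v u := by
    rintro u v ⟨hu, hv, h⟩; exact ⟨hv, hu, h.symm⟩
  have SCtrans : ∀ u v w, SCn u v → SCn v w → SCn u w := by
    rintro u v w ⟨hu, hv, h1⟩ ⟨hv', hw, h2⟩
    exact ⟨hu, hw, h1.trans h2⟩
  -- single application steps
  have S1 : ∀ u, u < a → SCn u (n - 1 - u) := by
    intro u hu
    have hun : u < n := by omega
    have hv := hp ⟨u, hun⟩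
    simp only [Fin.val_mk, if_pos hu] at hv
    have heq : p ⟨u, hun⟩ = ⟨n - 1 - u, by omega⟩ := Fin.ext hv
    exact ⟨hun, by omega, heq ▸ hstep ⟨u, hun⟩⟩
  have S2 : ∀ u, a ≤ u → u < a + b → SCn u (a + b - 1 - u) := by
    intro u hu1 hu2
    have hun : u < n := by omega
    have hv := hp ⟨u, hun⟩
    simp only [Fin.val_mk, if_neg (show ¬ u < a by omega), if_pos hu2] at hv
    have heq : p ⟨u, hun⟩ = ⟨a + b - 1 - u, by omega⟩ := Fin.ext hv
    exact ⟨hun, by omega, heq ▸ hstep ⟨u, hun⟩⟩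
  have S3 : ∀ u, a + b ≤ u → u < n → SCn u (n + b - 1 - u) := by
    intro u hu1 hun
    have hv := hp ⟨u, hun⟩
    simp only [Fin.val_mk, if_neg (show ¬ u < a by omega),
      if_neg (show ¬ u < a + b by omega)] at hv
    have heq : p ⟨u, hun⟩ = ⟨n + b - 1 - u, by omega⟩ := Fin.ext hv
    exact ⟨hun, by omega, heq ▸ hstep ⟨u, hun⟩⟩
  -- double steps
  have D1a : ∀ t, t < c → SCn t (t + b) := by
    intro t ht
    have h1 := S1 t (by omega)
    have h2 := S3 (n - 1 - t) (by omega) (by omega)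
    have he : n + b - 1 - (n - 1 - t) = t + b := by omega
    rw [he] at h2
    exact SCtrans _ _ _ h1 h2
  have D1b : ∀ t, c ≤ t → t < a → SCn t (t - c) := by
    intro t ht1 ht2
    have h1 := S1 t ht2
    have h2 := S2 (n - 1 - t) (by omega) (by omega)
    have he : a + b - 1 - (n - 1 - t) = t - c := by omega
    rw [he] at h2
    exact SCtrans _ _ _ h1 h2
  have D2a : ∀ t, a ≤ t → t < a + b → SCn t (t + c) := by
    intro t ht1 ht2
    have h1 := S2 t ht1 ht2
    have h2 := S1 (a + b - 1 - t) (by omega)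
    have he : n - 1 - (a + b - 1 - t) = t + c := by omega
    rw [he] at h2
    exact SCtrans _ _ _ h1 h2
  have D2b : ∀ t, a + b + 2 ≤ t → t < n → SCn t (t - b) := by
    intro t ht1 ht2
    have h1 := S3 t (by omega) ht2
    have h2 := S1 (n + b - 1 - t) (by omega)
    have he : n - 1 - (n + b - 1 - t) = t - b := by omega
    rw [he] at h2
    exact SCtrans _ _ _ h1 h2
  have D3 : SCn (a + b) (b - 2) := by
    have h1 := S3 (a + b) (le_refl _) (by omega)
    have he1 : n + b - 1 - (a + b) = a + 1 := by omega
    rw [he1] at h1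
    have h2 := S2 (a + 1) (by omega) (by omega)
    have he2 : a + b - 1 - (a + 1) = b - 2 := by omega
    rw [he2] at h2
    exact SCtrans _ _ _ h1 h2
  have D4 : SCn (a + b + 1) (b - 1) := by
    have h1 := S3 (a + b + 1) (by omega) (by omega)
    have he1 : n + b - 1 - (a + b + 1) = a := by omega
    rw [he1] at h1
    have h2 := S2 a (le_refl _) (by omega)
    have he2 : a + b - 1 - a = b - 1 := by omega
    rw [he2] at h2
    exact SCtrans _ _ _ h1 h2
  have hMpos : 0 < K + 1 := by omega
  -- connectivity on the four classes
  have C1 : ∀ u, u < K + 1 → ∀ v, v < K + 1 → SCn (2 * u) (2 * v) := by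
    refine cycle_conn' (K + 1) b2 hMpos hcopb (fun u v => SCn (2 * u) (2 * v))
      (fun u hu => SCrefl _ (by omega)) (fun u v h => SCsymm _ _ h)
      (fun u v w h1 h2 => SCtrans _ _ _ h1 h2) K (by omega) ?_
    intro u hu hne
    have hmod := mod_eval' (M := K + 1) (x := u + b2) (by omega) (by omega)
    by_cases hcase : u + b2 < K + 1
    · rw [if_pos hcase] at hmod
      rw [hmod]
      have := D1a (2 * u) (by omega)
      have heq : 2 * (u + b2) = 2 * u + b := by omega
      rw [heq]
      exact this
    · rw [if_neg hcase] at hmod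
      rw [hmod]
      have := D1b (2 * u) (by omega) (by omega)
      have heq : 2 * (u + b2 - (K + 1)) = 2 * u - c := by omega
      rw [heq]
      exact this
  have C2 : ∀ u, u < K + 1 → ∀ v, v < K + 1 → SCn (1 + 2 * u) (1 + 2 * v) := by
    refine cycle_conn' (K + 1) b2 hMpos hcopb (fun u v => SCn (1 + 2 * u) (1 + 2 * v))
      (fun u hu => SCrefl _ (by omega)) (fun u v h => SCsymm _ _ h)
      (fun u v w h1 h2 => SCtrans _ _ _ h1 h2) K (by omega) ?_
    intro u hu hne
    have hmod := mod_eval' (M := K + 1) (x := u + b2) (by omega) (by omega)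
    by_cases hcase : u + b2 < K + 1
    · rw [if_pos hcase] at hmod
      rw [hmod]
      have := D1a (1 + 2 * u) (by omega)
      have heq : 1 + 2 * (u + b2) = 1 + 2 * u + b := by omega
      rw [heq]
      exact this
    · rw [if_neg hcase] at hmod
      rw [hmod]
      have := D1b (1 + 2 * u) (by omega) (by omega)
      have heq : 1 + 2 * (u + b2 - (K + 1)) = 1 + 2 * u - c := by omega
      rw [heq]
      exact this
  have C3 : ∀ u, u < K + 1 → ∀ v, v < K + 1 → SCn (a + 2 * u) (a + 2 * v) := by
    refine cycle_conn' (K + 1) c2 hMpos hcopc (fun u v => SCn (a + 2 * u) (a + 2 * v))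
      (fun u hu => SCrefl _ (by omega)) (fun u v h => SCsymm _ _ h)
      (fun u v w h1 h2 => SCtrans _ _ _ h1 h2) b2 (by omega) ?_
    intro u hu hne
    have hmod := mod_eval' (M := K + 1) (x := u + c2) (by omega) (by omega)
    by_cases hcase : u + c2 < K + 1
    · rw [if_pos hcase] at hmod
      rw [hmod]
      have := D2a (a + 2 * u) (by omega) (by omega)
      have heq : a + 2 * (u + c2) = a + 2 * u + c := by omega
      rw [heq]
      exact this
    · rw [if_neg hcase] at hmod
      rw [hmod]
      have := D2b (a + 2 * u) (by omega) (by omega)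
      have heq : a + 2 * (u + c2 - (K + 1)) = a + 2 * u - b := by omega
      rw [heq]
      exact this
  have C4 : ∀ u, u < K + 1 → ∀ v, v < K + 1 → SCn (a + 1 + 2 * u) (a + 1 + 2 * v) := by
    refine cycle_conn' (K + 1) c2 hMpos hcopc (fun u v => SCn (a + 1 + 2 * u) (a + 1 + 2 * v))
      (fun u hu => SCrefl _ (by omega)) (fun u v h => SCsymm _ _ h)
      (fun u v w h1 h2 => SCtrans _ _ _ h1 h2) b2 (by omega) ?_
    intro u hu hne
    have hmod := mod_eval' (M := K + 1) (x := u + c2) (by omega) (by omega)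
    by_cases hcase : u + c2 < K + 1
    · rw [if_pos hcase] at hmod
      rw [hmod]
      have := D2a (a + 1 + 2 * u) (by omega) (by omega)
      have heq : a + 1 + 2 * (u + c2) = a + 1 + 2 * u + c := by omega
      rw [heq]
      exact this
    · rw [if_neg hcase] at hmod
      rw [hmod]
      have := D2b (a + 1 + 2 * u) (by omega) (by omega)
      have heq : a + 1 + 2 * (u + c2 - (K + 1)) = a + 1 + 2 * u - b := by omega
      rw [heq]
      exact this
  -- all evens reachable from 0
  have evens : ∀ t, t < n → t % 2 = 0 → SCn 0 t := by
    intro t ht hpar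
    by_cases hts : t < a + 2
    · have := C1 0 (by omega) (t / 2) (by omega)
      have he : 2 * (t / 2) = t := by omega
      rw [he] at this
      simpa using this
    · -- t ≥ a + 2
      have h1 : SCn 0 (b - 2) := by
        have := C1 0 (by omega) (b2 - 1) (by omega)
        have he : 2 * (b2 - 1) = b - 2 := by omega
        rw [he] at this
        simpa using this
      have h2 : SCn (b - 2) (a + b) := SCsymm _ _ D3
      have h3 : SCn (a + b) t := by
        have := C3 b2 (by omega) ((t - a) / 2) (by omega)
        have he1 : a + 2 * b2 = a + b := by omega
        have he2 : a + 2 * ((t - a) / 2) = t := by omega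
        rw [he1, he2] at this
        exact this
      exact SCtrans _ _ _ (SCtrans _ _ _ h1 h2) h3
  -- all odds reachable from n - 1
  have odds : ∀ t, t < n → t % 2 = 1 → SCn (n - 1) t := by
    intro t ht hpar
    have hn1 : n - 1 = a + 1 + 2 * K := by omega
    by_cases hts : a + 1 ≤ t
    · have := C4 K (by omega) ((t - a - 1) / 2) (by omega)
      rw [← hn1] at this
      have he : a + 1 + 2 * ((t - a - 1) / 2) = t := by omega
      rw [he] at this
      exact this
    · -- t < a + 1, t odd
      have h1 : SCn (n - 1) (a + b + 1) := by
        have := C4 K (by omega) b2 (by omega)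
        rw [← hn1] at this
        have he : a + 1 + 2 * b2 = a + b + 1 := by omega
        rw [he] at this
        exact this
      have h2 : SCn (a + b + 1) (b - 1) := D4
      have h3 : SCn (b - 1) t := by
        have := C2 (b2 - 1) (by omega) ((t - 1) / 2) (by omega)
        have he1 : 1 + 2 * (b2 - 1) = b - 1 := by omega
        have he2 : 1 + 2 * ((t - 1) / 2) = t := by omega
        rw [he1, he2] at this
        exact this
      exact SCtrans _ _ _ (SCtrans _ _ _ h1 h2) h3
  have link : SCn 0 (n - 1) := by
    have := S1 0 ha
    simpa using this
  have main : ∀ x : Fin n, SCn 0 (x : ℕ) := by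
    intro x
    have hx := x.isLt
    rcases Nat.mod_two_eq_zero_or_one (x : ℕ) with hpar | hpar
    · exact evens _ hx hpar
    · exact SCtrans _ _ _ link (odds _ hx hpar)
  intro x y
  obtain ⟨h0, hx, hscx⟩ := main x
  obtain ⟨h0', hy, hscy⟩ := main y
  have hxx : (⟨(x : ℕ), hx⟩ : Fin n) = x := rfl
  have hyy : (⟨(y : ℕ), hy⟩ : Fin n) = y := rfl
  have hsc : p.SameCycle x y := by
    rw [← hxx, ← hyy]
    exact hscx.symm.trans hscy
  obtain ⟨i, _, hi⟩ := hsc.exists_pow_eq'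
  exact ⟨i, hi⟩
end

section
/- Let n = 4k for a positive integer k. If a, b, c are positive integers with a+b+c=n such that the permutation p(a,b,c) (defined by p_i = n+1-i for 1 ≤ i ≤ a, p_i = a+b+1-i for a+1 ≤ i ≤ a+b, p_i = n+b+1-i for a+b+1 ≤ i ≤ n) is a cyclic permutation, then a = 2k = n/2. -/
/-- Auxiliary: the induced first-return map on `[0, b+c)`. -/
def PhiAux (a b c v : ℕ) : ℕ :=
  if v < a then (if v < c then b + v else v - c)
  else if v < a + b then a + b - 1 - v
  else b + c + (a + b - 1) - v

/-- Auxiliary: reversal of the initial segment `[0, a)`. -/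
def HhAux (a v : ℕ) : ℕ := if v < a then a - 1 - v else v

lemma phiAux_lt {a b c : ℕ} (hb : 0 < b) (hc : 0 < c) (hlt : a < b + c) :
    ∀ v, v < b + c → PhiAux a b c v < b + c := by
  intro v hv; unfold PhiAux; split_ifs <;> omega

lemma keyAux {a b c : ℕ} (ha : 0 < a) (hb : 0 < b) (hc : 0 < c) (hlt : a < b + c) :
    ∀ v, v < b + c → PhiAux a b c (HhAux a (PhiAux a b c v)) = HhAux a v := by
  intro v hv; unfold PhiAux HhAux; split_ifs <;> omega

lemma phiAux_iter_lt {a b c : ℕ} (hb : 0 < b) (hc : 0 < c) (hlt : a < b + c) :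
    ∀ j v, v < b + c → (PhiAux a b c)^[j] v < b + c := by
  intro j
  induction j with
  | zero => intro v hv; simpa using hv
  | succ j ih =>
      intro v hv
      rw [Function.iterate_succ_apply]
      exact ih _ (phiAux_lt hb hc hlt v hv)

lemma iterKeyAux {a b c : ℕ} (ha : 0 < a) (hb : 0 < b) (hc : 0 < c) (hlt : a < b + c) :
    ∀ j v, v < b + c → (PhiAux a b c)^[j] (HhAux a ((PhiAux a b c)^[j] v)) = HhAux a v := by
  intro j
  induction j with
  | zero => intro v hv; simp
  | succ j ih =>
      intro v hv
      have h1 : (PhiAux a b c)^[j] v < b + c := phiAux_iter_lt hb hc hlt j v hv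
      have e1 : (PhiAux a b c)^[j+1] v = PhiAux a b c ((PhiAux a b c)^[j] v) :=
        Function.iterate_succ_apply' _ _ _
      rw [e1, Function.iterate_succ_apply, keyAux ha hb hc hlt _ h1]
      exact ih v hv

set_option maxHeartbeats 2000000 in
theorem stmt12 (n k a b c : ℕ) (hk : 0 < k) (hn : n = 4 * k)
    (ha : 0 < a) (hb : 0 < b) (hc : 0 < c) (habc : a + b + c = n)
    (p : Equiv.Perm (Fin n)) (hp : IsTriplePerm n a b p) (hcyc : IsCyclicPerm p) :
    a = 2 * k ∧ a = n / 2 := by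
  classical
  have hmain : a = 2 * k := by
    rcases lt_trichotomy a (2 * k) with hlt | heq | hgt
    · -- a < n/2 : impossible
      exfalso
      have hmlt : a < b + c := by omega
      -- computation lemmas for p
      have L1 : ∀ x : Fin n, a ≤ (x : ℕ) → (x : ℕ) < b + c →
          ((p x : ℕ)) = PhiAux a b c (x : ℕ) := by
        intro x h1 h2
        have hx := x.isLt
        rw [hp x]
        unfold PhiAux
        split_ifs <;> omega
      have L3 : ∀ x : Fin n, (x : ℕ) < a → ((p (p x) : ℕ)) = PhiAux a b c (x : ℕ) := by
        intro x h1
        have hx := x.isLt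
        have h2 : ((p x : ℕ)) = n - 1 - (x : ℕ) := by
          rw [hp x]; split_ifs <;> omega
        have h3 := hp (p x)
        rw [h3, h2]
        unfold PhiAux
        split_ifs <;> omega
      -- transfer: p-orbits induce PhiAux-orbits on [0, b+c)
      have htrans : ∀ t : ℕ, ∀ x : Fin n, (x : ℕ) < b + c → (((p ^ t) x : ℕ)) < b + c →
          ∃ j, (PhiAux a b c)^[j] (x : ℕ) = (((p ^ t) x : ℕ)) := by
        intro t
        induction t using Nat.strong_induction_on with
        | _ t ih =>
          intro x hx hxt
          cases t with
          | zero => exact ⟨0, by simp⟩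
          | succ s =>
            by_cases hxa : (x : ℕ) < a
            · cases s with
              | zero =>
                exfalso
                have h2 : ((p x : ℕ)) = n - 1 - (x : ℕ) := by
                  rw [hp x]; split_ifs <;> omega
                have h3 : (p ^ (0+1)) x = p x := by simp
                rw [h3] at hxt
                have hx' := x.isLt
                omega
              | succ s =>
                have hkey : ((p (p x) : ℕ)) = PhiAux a b c (x : ℕ) := L3 x hxa
                have hlt2 : ((p (p x) : ℕ)) < b + c := by
                  rw [hkey]; exact phiAux_lt hb hc hmlt _ hx
                have hrw : (p ^ (s+1+1)) x = (p ^ s) (p (p x)) := by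
                  rw [pow_succ, pow_succ, Equiv.Perm.mul_apply, Equiv.Perm.mul_apply]
                rw [hrw] at hxt ⊢
                obtain ⟨j, hj⟩ := ih s (by omega) (p (p x)) hlt2 hxt
                refine ⟨j + 1, ?_⟩
                rw [Function.iterate_succ_apply, ← hkey]
                exact hj
            · have hkey : ((p x : ℕ)) = PhiAux a b c (x : ℕ) :=
                L1 x (le_of_not_gt hxa) hx
              have hlt2 : ((p x : ℕ)) < b + c := by
                rw [hkey]; exact phiAux_lt hb hc hmlt _ hx
              have hrw : (p ^ (s+1)) x = (p ^ s) (p x) := by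
                rw [pow_succ, Equiv.Perm.mul_apply]
              rw [hrw] at hxt ⊢
              obtain ⟨j, hj⟩ := ih s (by omega) (p x) hlt2 hxt
              refine ⟨j + 1, ?_⟩
              rw [Function.iterate_succ_apply, ← hkey]
              exact hj
      -- reachability of every point of [0, b+c) from a
      have han : a < n := by omega
      have reach : ∀ z : ℕ, z < b + c → ∃ j, (PhiAux a b c)^[j] a = z := by
        intro z hz
        have hzn : z < n := by omega
        obtain ⟨t, ht⟩ := hcyc ⟨a, han⟩ ⟨z, hzn⟩
        have hval : (((p ^ t) (⟨a, han⟩ : Fin n) : ℕ)) = z := by rw [ht]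
        have hcoe : ((⟨a, han⟩ : Fin n) : ℕ) = a := rfl
        obtain ⟨j, hj⟩ := htrans t ⟨a, han⟩ (by rw [hcoe]; exact hmlt)
          (by rw [hval]; exact hz)
        refine ⟨j, ?_⟩
        rw [hcoe] at hj
        rw [hj, hval]
      have hHa : HhAux a a = a := by unfold HhAux; rw [if_neg (lt_irrefl a)]
      -- swap property for fixed points of HhAux
      have hswap : ∀ z, z < b + c → HhAux a z = z → ∀ j, (PhiAux a b c)^[j] a = z →
          (PhiAux a b c)^[j] z = a := by
        intro z hz hfix j hj
        have h := iterKeyAux ha hb hc hmlt j a hmlt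
        rw [hj, hfix, hHa] at h
        exact h
      -- positive period exists
      have hfix1 : HhAux a (a+1) = a + 1 := by unfold HhAux; rw [if_neg (by omega)]
      have h1m : a + 1 < b + c := by omega
      obtain ⟨j2, hj2⟩ := reach (a+1) h1m
      have hj2s : (PhiAux a b c)^[j2] (a+1) = a := hswap (a+1) h1m hfix1 j2 hj2
      have hper : ∃ d, 0 < d ∧ (PhiAux a b c)^[d] a = a := by
        refine ⟨j2 + j2, ?_, ?_⟩
        · rcases Nat.eq_zero_or_pos j2 with h | h
          · exfalso
            rw [h, Function.iterate_zero_apply] at hj2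
            omega
          · omega
        · rw [Function.iterate_add_apply, hj2]
          exact hj2s
      obtain ⟨d, hdspec, hdmin⟩ :
          ∃ d, (0 < d ∧ (PhiAux a b c)^[d] a = a) ∧
            ∀ e, e < d → ¬(0 < e ∧ (PhiAux a b c)^[e] a = a) :=
        ⟨Nat.find hper, Nat.find_spec hper, fun e he => Nat.find_min hper he⟩
      have hmul : ∀ q, (PhiAux a b c)^[d * q] a = a := by
        intro q
        induction q with
        | zero => simp
        | succ q ihq =>
            rw [Nat.mul_succ, Function.iterate_add_apply, hdspec.2]
            exact ihq
      have hred : ∀ j, (PhiAux a b c)^[j] a = (PhiAux a b c)^[j % d] a := by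
        intro j
        conv_lhs => rw [← Nat.mod_add_div j d]
        rw [Function.iterate_add_apply, hmul (j / d)]
      have hdvd : ∀ j, (PhiAux a b c)^[j] a = a → d ∣ j := by
        intro j hjj
        have h1 : (PhiAux a b c)^[j % d] a = a := by rw [← hred]; exact hjj
        by_contra hnd
        have h2 : j % d ≠ 0 := fun h => hnd (Nat.dvd_of_mod_eq_zero h)
        exact hdmin (j % d) (Nat.mod_lt _ hdspec.1) ⟨Nat.pos_of_ne_zero h2, h1⟩
      -- every HhAux-fixed point z ≠ a sits at position exactly d/2
      have keyz : ∀ z, z < b + c → HhAux a z = z → z ≠ a →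
          ∃ r, 2 * r = d ∧ (PhiAux a b c)^[r] a = z := by
        intro z hz hfix hne
        obtain ⟨j, hja⟩ := reach z hz
        have hjz := hswap z hz hfix j hja
        have h2 : (PhiAux a b c)^[j + j] a = a := by
          rw [Function.iterate_add_apply, hja]; exact hjz
        have hdj : d ∣ j + j := hdvd _ h2
        have hgr : (PhiAux a b c)^[j % d] a = z := by rw [← hred]; exact hja
        have hrd : j % d < d := Nat.mod_lt _ hdspec.1
        have hr0 : j % d ≠ 0 := by
          intro h
          rw [h, Function.iterate_zero_apply] at hgr
          exact hne hgr.symm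
        have hm1 : j % d ≡ j [MOD d] := Nat.mod_modEq j d
        have hm2 : (j % d + j % d) ≡ (j + j) [MOD d] := hm1.add hm1
        have hm3 : (j + j) ≡ 0 [MOD d] := Nat.modEq_zero_iff_dvd.mpr hdj
        have hdr : d ∣ (j % d + j % d) := Nat.modEq_zero_iff_dvd.mp (hm2.trans hm3)
        obtain ⟨s, hs⟩ := hdr
        have hs2 : d * s < d * 2 := by rw [← hs]; omega
        have hslt : s < 2 := lt_of_mul_lt_mul_left hs2 (Nat.zero_le d)
        have hs0 : s ≠ 0 := by
          intro h
          rw [h, Nat.mul_zero] at hs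
          omega
        have hs1 : s = 1 := by omega
        rw [hs1, Nat.mul_one] at hs
        exact ⟨j % d, by omega, hgr⟩
      obtain ⟨r2, hr2, hg2⟩ := keyz (a+1) h1m hfix1 (by omega)
      by_cases hpar : a % 2 = 1
      · have hfix3 : HhAux a ((a-1)/2) = (a-1)/2 := by
          unfold HhAux; rw [if_pos (by omega)]; omega
        have h3m : (a-1)/2 < b + c := by omega
        obtain ⟨r3, hr3, hg3⟩ := keyz ((a-1)/2) h3m hfix3 (by omega)
        have hrr : r2 = r3 := by omega
        rw [hrr, hg3] at hg2
        omega
      · have hpar0 : a % 2 = 0 := by omega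
        have h3m : a + 2 < b + c := by omega
        have hfix3 : HhAux a (a+2) = a + 2 := by
          unfold HhAux; rw [if_neg (by omega)]
        obtain ⟨r3, hr3, hg3⟩ := keyz (a+2) h3m hfix3 (by omega)
        have hrr : r2 = r3 := by omega
        rw [hrr, hg3] at hg2
        omega
    · exact heq
    · -- a > n/2 : impossible
      exfalso
      have hx0 : n - a < n := by omega
      have hcoe1 : ((⟨n - a, hx0⟩ : Fin n) : ℕ) = n - a := rfl
      have e1 : ((p (⟨n - a, hx0⟩ : Fin n) : ℕ)) = a - 1 := by
        rw [hp ⟨n - a, hx0⟩, hcoe1]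
        split_ifs <;> omega
      have e2 : ∀ y : Fin n, (y : ℕ) = a - 1 → ((p y : ℕ)) = n - a := by
        intro y hy
        rw [hp y, hy]
        split_ifs <;> omega
      have orb : ∀ t, (((p ^ t) (⟨n - a, hx0⟩ : Fin n) : ℕ)) = n - a ∨
          (((p ^ t) (⟨n - a, hx0⟩ : Fin n) : ℕ)) = a - 1 := by
        intro t
        induction t with
        | zero => left; rw [pow_zero]; rfl
        | succ t iht =>
            have hstep : (p ^ (t+1)) (⟨n - a, hx0⟩ : Fin n) =
                p ((p ^ t) (⟨n - a, hx0⟩ : Fin n)) := by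
              rw [pow_succ', Equiv.Perm.mul_apply]
            rcases iht with h | h
            · right
              rw [hstep]
              have hxx : (p ^ t) (⟨n - a, hx0⟩ : Fin n) = (⟨n - a, hx0⟩ : Fin n) :=
                Fin.ext (by rw [h, hcoe1])
              rw [hxx]
              exact e1
            · left
              rw [hstep]
              exact e2 _ h
      have h0n : (0 : ℕ) < n := by omega
      obtain ⟨t, ht⟩ := hcyc ⟨n - a, hx0⟩ ⟨0, h0n⟩
      have horb := orb t
      rw [ht] at horb
      have h00 : ((⟨0, h0n⟩ : Fin n) : ℕ) = 0 := rfl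
      rw [h00] at horb
      rcases horb with h | h <;> omega
  exact ⟨hmain, by omega⟩
end

section
/- For n ≥ 4, the number of cyclic permutations of length n avoiding both patterns 123 and 231 is at most (3n-6)/4. -/
namespace Stmt15


variable {n : ℕ} (p : Equiv.Perm (Fin n))

lemma contains123 {i j k : Fin n} (h1 : i < j) (h2 : j < k)
    (hp1 : p i < p j) (hp2 : p j < p k) : Contains p pat123 := by
  refine ⟨![i, j, k], ?_, ?_⟩
  · intro x y hxy
    fin_cases x <;> fin_cases y <;>
      simp_all [Matrix.cons_val_zero, Matrix.cons_val_one] <;> omega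
  · intro x y
    have hik : p i < p k := hp1.trans hp2
    fin_cases x <;> fin_cases y <;>
      simp [pat123, Matrix.cons_val_zero, Matrix.cons_val_one, hp1, hp2, hik,
        le_of_lt, not_lt_of_gt] <;>
      first
        | exact hp1 | exact hp2 | exact hik
        | (intro h; exact absurd h (by omega))
        | omega
        | exact fun h => absurd h (not_lt.mpr (le_of_lt ‹_›))

lemma contains231 {i j k : Fin n} (h1 : i < j) (h2 : j < k)
    (hp1 : p k < p i) (hp2 : p i < p j) : Contains p pat231 := by
  refine ⟨![i, j, k], ?_, ?_⟩
  · intro x y hxy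
    fin_cases x <;> fin_cases y <;>
      simp_all [Matrix.cons_val_zero, Matrix.cons_val_one] <;> omega
  · intro x y
    have hkj : p k < p j := hp1.trans hp2
    fin_cases x <;> fin_cases y <;>
      simp [pat231, Matrix.cons_val_zero, Matrix.cons_val_one, hp1, hp2, hkj] <;>
      first
        | exact hp1 | exact hp2 | exact hkj
        | omega
        | exact fun h => absurd h (by omega)
        | exact absurd ‹_› (by omega)



variable {n : ℕ} (p : Equiv.Perm (Fin n))

lemma card_lt (y : Fin n) :
    (Finset.univ.filter (fun m => p m < y)).card = (y : ℕ) := by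
  have h : Finset.univ.filter (fun m => p m < y)
      = (Finset.Iio y).map ⟨p.symm, p.symm.injective⟩ := by
    ext m
    simp only [Finset.mem_filter, Finset.mem_univ, true_and, Finset.mem_map,
      Finset.mem_Iio, Function.Embedding.coeFn_mk]
    constructor
    · intro hm; exact ⟨p m, hm, p.symm_apply_apply m⟩
    · rintro ⟨z, hz, rfl⟩; simpa using hz
  rw [h, Finset.card_map, Fin.card_Iio]

theorem toTriple (h123 : Avoids p pat123) (h231 : Avoids p pat231) :
    (∀ i : Fin n, (p i : ℕ) = n - 1 - (i : ℕ)) ∨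
    ∃ a b, 1 ≤ b ∧ a + b < n ∧ IsTriplePerm n a b p := by
  by_cases hdec : ∀ i : Fin n, (p i : ℕ) = n - 1 - (i : ℕ)
  · exact Or.inl hdec
  right
  have A123 : ∀ i j k : Fin n, i < j → j < k → p i < p j → p j < p k → False :=
    fun i j k h1 h2 hp1 hp2 => h123 (contains123 p h1 h2 hp1 hp2)
  have A231 : ∀ i j k : Fin n, i < j → j < k → p k < p i → p i < p j → False :=
    fun i j k h1 h2 hp1 hp2 => h231 (contains231 p h1 h2 hp1 hp2)
  classical
  push_neg at hdec
  set Sbad : Finset (Fin n) := Finset.univ.filter (fun i => (p i : ℕ) ≠ n - 1 - (i : ℕ))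
    with hSbad
  obtain ⟨i0, hi0⟩ := hdec
  have hSne : Sbad.Nonempty := ⟨i0, by simp [hSbad, hi0]⟩
  set α : Fin n := Sbad.min' hSne with hαdef
  have hα : (p α : ℕ) ≠ n - 1 - (α : ℕ) := by
    have h := Finset.mem_filter.mp (Sbad.min'_mem hSne)
    exact h.2
  have hpre : ∀ i : Fin n, i < α → (p i : ℕ) = n - 1 - (i : ℕ) := by
    intro i hi
    by_contra h
    exact absurd (Sbad.min'_le i (by simp [hSbad, h])) (not_le.mpr hi)
  set a : ℕ := (α : ℕ) with hadef
  -- Step A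
  have key : ∀ x : Fin n, α ≤ x → (p x : ℕ) + a + 1 ≤ n := by
    intro x hx
    by_contra h
    push_neg at h
    have hpx : (p x : ℕ) < n := (p x).isLt
    have hin : n - 1 - (p x : ℕ) < n := by omega
    have hia : (⟨n - 1 - (p x : ℕ), hin⟩ : Fin n) < α := by
      rw [Fin.lt_def]; simp; omega
    have hval := hpre _ hia
    have heq : p (⟨n - 1 - (p x : ℕ), hin⟩ : Fin n) = p x := by
      apply Fin.ext
      rw [hval]; simp; omega
    have heq2 := p.injective heq
    rw [Fin.ext_iff] at heq2
    simp at heq2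
    rw [Fin.lt_def] at hia
    rw [Fin.le_def] at hx
    simp at hia
    omega
  have han : a < n := α.isLt
  have hpα : (p α : ℕ) + a + 2 ≤ n := by
    have h1 := key α le_rfl
    have : (p α : ℕ) ≠ n - 1 - a := hα
    omega
  set v : ℕ := (p α : ℕ) with hvdef
  set b : ℕ := v + 1 with hbdef
  have hna : n - 1 - a < n := by omega
  set j : Fin n := p.symm ⟨n - 1 - a, hna⟩ with hjdef
  have hj : (p j : ℕ) = n - 1 - a := by
    rw [hjdef]; simp
  have hαj : α < j := by
    rcases lt_trichotomy α j with h | h | h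
    · exact h
    · exfalso; apply hα; rw [← h] at hj; omega
    · exfalso
      have := hpre j h
      rw [Fin.lt_def] at h
      have : (j : ℕ) = a := by omega
      have : j = α := Fin.ext this
      rw [this] at hj
      exact hα (by omega)
  -- values at positions ≥ α are < n - 1 - a unless at j
  have hlt : ∀ x : Fin n, α ≤ x → x ≠ j → (p x : ℕ) < n - 1 - a := by
    intro x hx hxj
    have h1 := key x hx
    have h2 : p x ≠ p j := fun h => hxj (p.injective h)
    rw [Fin.ne_iff_vne] at h2
    rw [hj] at h2
    omega
  -- Step B : decreasing on [α, j)
  have StepB : ∀ x y : Fin n, α ≤ x → x < y → y < j → p y < p x := by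
    intro x y hx hxy hyj
    rcases lt_trichotomy (p y) (p x) with h | h | h
    · exact h
    · exact absurd (p.injective h) (by intro hh; rw [hh] at hxy; exact lt_irrefl _ hxy)
    · exfalso
      apply A123 x y j hxy hyj h
      rw [Fin.lt_def, hj]
      exact hlt y (hx.trans hxy.le) hyj.ne
  -- Step C
  have StepC : ∀ x k : Fin n, α ≤ x → x < j → j < k → p x < p k := by
    intro x k hx hxj hjk
    rcases lt_trichotomy (p x) (p k) with h | h | h
    · exact h
    · exact absurd (p.injective h) (by intro hh; rw [hh] at hxj; exact absurd (hxj.trans hjk) (lt_irrefl _))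
    · exfalso
      apply A231 x j k hxj hjk h
      rw [Fin.lt_def, hj]
      exact hlt x hx hxj.ne
  -- Step D
  have StepD : ∀ k k' : Fin n, j < k → k < k' → p k' < p k := by
    intro k k' hjk hkk'
    rcases lt_trichotomy (p k') (p k) with h | h | h
    · exact h
    · exact absurd (p.injective h) (by intro hh; rw [hh] at hkk'; exact lt_irrefl _ hkk')
    · exfalso
      exact A123 α k k' (hαj.trans hjk) hkk' (StepC α k le_rfl hαj hjk) h
  -- Step E : values on [α, j)
  have StepE : ∀ x : Fin n, α ≤ x → x < j → (p x : ℕ) = (j : ℕ) - 1 - (x : ℕ) := by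
    intro x hx hxj
    have hset : Finset.univ.filter (fun m => p m < p x) = Finset.Ioo x j := by
      ext m
      simp only [Finset.mem_filter, Finset.mem_univ, true_and, Finset.mem_Ioo]
      constructor
      · intro hm
        have hmα : α ≤ m := by
          by_contra hc
          push_neg at hc
          have h1 := hpre m hc
          have h2 := key x hx
          rw [Fin.lt_def] at hm hc
          omega
        have hmj : m ≠ j := by
          intro hh
          rw [hh, Fin.lt_def, hj] at hm
          have := hlt x hx hxj.ne
          omega
        constructor
        · rcases lt_trichotomy m x with h | h | h
          · exact absurd (StepB m x hmα h hxj) (not_lt.mpr hm.le)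
          · rw [h] at hm; exact absurd hm (lt_irrefl _)
          · exact h
        · rcases lt_trichotomy m j with h | h | h
          · exact h
          · exact absurd h hmj
          · exact absurd (StepC x m hx hxj h) (not_lt.mpr hm.le)
      · rintro ⟨h1, h2⟩
        exact StepB x m hx h1 h2
    have hc1 := card_lt p (p x)
    rw [hset, Fin.card_Ioo] at hc1
    rw [Fin.lt_def] at hxj
    omega
  -- j = a + b
  have hjab : (j : ℕ) = a + b := by
    have := StepE α le_rfl hαj
    rw [Fin.lt_def] at hαj
    omega
  -- Step F : values above j
  have StepF : ∀ x : Fin n, j < x → (p x : ℕ) = n + b - 1 - (x : ℕ) := by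
    intro x hjx
    have hset : Finset.univ.filter (fun m => p m < p x)
        = Finset.Ico α j ∪ Finset.Ioi x := by
      ext m
      simp only [Finset.mem_filter, Finset.mem_univ, true_and, Finset.mem_union,
        Finset.mem_Ico, Finset.mem_Ioi]
      constructor
      · intro hm
        have hmα : α ≤ m := by
          by_contra hc
          push_neg at hc
          have h1 := hpre m hc
          have h2 := key x (hαj.trans hjx).le
          rw [Fin.lt_def] at hm hc
          omega
        have hmj : m ≠ j := by
          intro hh
          rw [hh, Fin.lt_def, hj] at hm
          have := hlt x (hαj.trans hjx).le (by intro hh2; rw [hh2] at hjx; exact lt_irrefl _ hjx)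
          omega
        rcases lt_trichotomy m j with h | h | h
        · exact Or.inl ⟨hmα, h⟩
        · exact absurd h hmj
        · right
          rcases lt_trichotomy m x with h2 | h2 | h2
          · exact absurd (StepD m x h h2) (not_lt.mpr hm.le)
          · rw [h2] at hm; exact absurd hm (lt_irrefl _)
          · exact h2
      · rintro (⟨h1, h2⟩ | h1)
        · exact StepC m x h1 h2 hjx
        · exact StepD x m hjx h1
    have hdisj : Disjoint (Finset.Ico α j) (Finset.Ioi x) := by
      rw [Finset.disjoint_left]
      intro m hm1 hm2
      rw [Finset.mem_Ico] at hm1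
      rw [Finset.mem_Ioi] at hm2
      exact absurd (hjx.trans hm2) (not_lt.mpr hm1.2.le)
    have hc1 := card_lt p (p x)
    rw [hset, Finset.card_union_of_disjoint hdisj, Fin.card_Ico, Fin.card_Ioi] at hc1
    rw [Fin.lt_def] at hjx
    have hxn : (x : ℕ) < n := x.isLt
    omega
  -- assemble
  refine ⟨a, b, by omega, by rw [← hjab]; exact j.isLt, ?_⟩
  intro i
  rcases lt_trichotomy (i : ℕ) a with hia | hia | hia
  · rw [if_pos hia]
    exact hpre i (by rwa [Fin.lt_def])
  · rw [if_neg (by omega)]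
    rw [if_pos (by omega)]
    have := StepE i (by rw [Fin.le_def]; omega) (by rw [Fin.lt_def]; omega)
    omega
  · rcases lt_trichotomy (i : ℕ) (a + b) with hib | hib | hib
    · rw [if_neg (by omega), if_pos hib]
      have := StepE i (by rw [Fin.le_def]; omega) (by rw [Fin.lt_def]; omega)
      omega
    · rw [if_neg (by omega), if_neg (by omega)]
      have hij : i = j := Fin.ext (by omega)
      rw [hij, hj]
      omega
    · rw [if_neg (by omega), if_neg (by omega)]
      exact StepF i (by rw [Fin.lt_def]; omega)




variable {n : ℕ} (p : Equiv.Perm (Fin n))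

lemma orbit_mem {S : Set (Fin n)} (hS : ∀ x ∈ S, p x ∈ S) {x : Fin n} (hx : x ∈ S)
    (m : ℕ) : (p ^ m) x ∈ S := by
  induction m with
  | zero => simpa using hx
  | succ k ih =>
    rw [pow_succ', Equiv.Perm.mul_apply]
    exact hS _ ih

lemma not_cyclic_of_dec (hn : 3 ≤ n) (h : ∀ i : Fin n, (p i : ℕ) = n - 1 - (i : ℕ)) :
    ¬ IsCyclicPerm p := by
  intro hc
  set S : Set (Fin n) := {x | (x : ℕ) = 0 ∨ (x : ℕ) = n - 1} with hS
  have hinv : ∀ x ∈ S, p x ∈ S := by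
    intro x hx
    rcases hx with h0 | h1
    · right; rw [h x, h0]; omega
    · left; rw [h x, h1]; omega
  obtain ⟨m, hm⟩ := hc ⟨0, by omega⟩ ⟨1, by omega⟩
  have := orbit_mem p hinv (by left; rfl : (⟨0, by omega⟩ : Fin n) ∈ S) m
  rw [hm] at this
  rcases this with h0 | h1
  · simp only [Fin.val_mk] at h0; omega
  · simp only [Fin.val_mk] at h1; omega


set_option maxHeartbeats 2000000 in
theorem triple_constraints (hn : 4 ≤ n) (a b : ℕ) (hb : 1 ≤ b) (hab : a + b < n)
    (ht : IsTriplePerm n a b p) (hc : IsCyclicPerm p) :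
    b ≤ a ∧ n - a - b ≤ a ∧ 2 * a ≤ n ∧ n ≤ 2 * a + 2 ∧
      (n = 2 * a + 2 → 2 ∣ a ∧ 2 ∣ b) := by
  classical
  set c : ℕ := n - a - b with hcdef
  have hc1 : 1 ≤ c := by omega
  have hnabc : n = a + b + c := by omega
  have hv : ∀ (x : ℕ) (hx : x < n), (p ⟨x, hx⟩ : ℕ) =
      if x < a then n - 1 - x else if x < a + b then a + b - 1 - x else n + b - 1 - x :=
    fun x hx => ht ⟨x, hx⟩
  -- generic: no proper nonempty invariant set
  have hnoinv : ∀ (S : Set (Fin n)), (∀ x ∈ S, p x ∈ S) → ∀ x₀ ∈ S, ∀ y ∉ S, False := by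
    intro S hS x₀ hx₀ y hy
    obtain ⟨m, hm⟩ := hc x₀ y
    exact hy (hm ▸ orbit_mem p hS hx₀ m)
  -- b ≤ a
  have hba : b ≤ a := by
    by_contra hcon
    push_neg at hcon
    have han : a < n := by omega
    have hbn : b - 1 < n := by omega
    have e1 : p ⟨a, han⟩ = ⟨b - 1, hbn⟩ := Fin.ext (by rw [hv a han]; simp only [Fin.val_mk]; split_ifs <;> omega)
    have e2 : p ⟨b - 1, hbn⟩ = ⟨a, han⟩ := Fin.ext (by rw [hv (b-1) hbn]; simp only [Fin.val_mk]; split_ifs <;> omega)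
    set S : Set (Fin n) := {x | (x : ℕ) = a ∨ (x : ℕ) = b - 1} with hSdef
    have hinv : ∀ x ∈ S, p x ∈ S := by
      intro x hx
      rcases hx with h0 | h0
      · have : x = ⟨a, han⟩ := Fin.ext h0
        rw [this, e1]; right; rfl
      · have : x = ⟨b - 1, hbn⟩ := Fin.ext h0
        rw [this, e2]; left; rfl
    obtain ⟨z, hzn, hz1, hz2⟩ : ∃ z, z < n ∧ z ≠ a ∧ z ≠ b - 1 :=
      ⟨if a = 0 then (if b - 1 = 1 then 2 else 1) else 0, by split_ifs <;> omega⟩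
    exact hnoinv S hinv ⟨a, han⟩ (Or.inl rfl) ⟨z, hzn⟩ (by
      intro hmem
      rcases hmem with h0 | h0 <;> simp only [Fin.val_mk] at h0 <;> omega)
  -- c ≤ a
  have hca : c ≤ a := by
    by_contra hcon
    push_neg at hcon
    have h1n : a + b < n := hab
    have h2n : n - a - 1 < n := by omega
    have e1 : p ⟨a + b, h1n⟩ = ⟨n - a - 1, h2n⟩ := Fin.ext (by rw [hv (a+b) h1n]; simp only [Fin.val_mk]; split_ifs <;> omega)
    have e2 : p ⟨n - a - 1, h2n⟩ = ⟨a + b, h1n⟩ := Fin.ext (by rw [hv (n-a-1) h2n]; simp only [Fin.val_mk]; split_ifs <;> omega)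
    set S : Set (Fin n) := {x | (x : ℕ) = a + b ∨ (x : ℕ) = n - a - 1} with hSdef
    have hinv : ∀ x ∈ S, p x ∈ S := by
      intro x hx
      rcases hx with h0 | h0
      · have : x = ⟨a + b, h1n⟩ := Fin.ext h0
        rw [this, e1]; right; rfl
      · have : x = ⟨n - a - 1, h2n⟩ := Fin.ext h0
        rw [this, e2]; left; rfl
    obtain ⟨z, hzn, hz1, hz2⟩ : ∃ z, z < n ∧ z ≠ a + b ∧ z ≠ n - a - 1 :=
      ⟨if a + b = 0 then (if n - a - 1 = 1 then 2 else 1) else 0, by split_ifs <;> omega⟩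
    exact hnoinv S hinv ⟨a + b, h1n⟩ (Or.inl rfl) ⟨z, hzn⟩ (by
      intro hmem
      rcases hmem with h0 | h0 <;> simp only [Fin.val_mk] at h0 <;> omega)
  -- 2a ≤ n
  have h2a : 2 * a ≤ n := by
    by_contra hcon
    push_neg at hcon
    set S : Set (Fin n) := {x | n - a ≤ (x : ℕ) ∧ (x : ℕ) < a} with hSdef
    have hinv : ∀ x ∈ S, p x ∈ S := by
      rintro x ⟨h1, h2⟩
      have hval : (p x : ℕ) = n - 1 - (x : ℕ) := by
        have := ht x
        rwa [if_pos h2] at this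
      constructor <;> rw [hval] <;> omega
    have h0a : n - a < n := by omega
    exact hnoinv S hinv ⟨n - a, h0a⟩ (by constructor <;> simp only [Fin.val_mk] <;> omega)
      ⟨0, by omega⟩ (by rintro ⟨h1, h2⟩; simp only [Fin.val_mk] at h1; omega)
  -- the first-return map T
  set T : ℕ → ℕ := fun x => if c ≤ x then x - c else if x + b < a then x + b else a - 1 - x
    with hTdef
  have ha1 : 1 ≤ a := le_trans hb hba
  have hTcl : ∀ x, x < a → T x < a := by
    intro x hx
    simp only [hTdef]
    split_ifs <;> omega
  have hTrev : ∀ x, x < a → T (a - 1 - T x) = a - 1 - x := by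
    intro x hx
    simp only [hTdef]
    split_ifs <;> omega
  -- transfer of transitivity
  have hxan : ∀ x : ℕ, x < a → x < n := by omega
  have htrans : ∀ m, ∀ x y, ∀ (hx : x < a) (hy : y < a),
      (p ^ m) ⟨x, hxan x hx⟩ = ⟨y, hxan y hy⟩ → ∃ k, T^[k] x = y := by
    intro m
    induction m using Nat.strong_induction_on with
    | _ m IH =>
      intro x y hx hy hm
      rcases m with _ | m'
      · rw [pow_zero] at hm
        simp only [Equiv.Perm.coe_one, id_eq] at hm
        exact ⟨0, by simpa using congrArg Fin.val hm⟩
      have hx1n : x < n := by omega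
      have h2n : n - 1 - x < n := by omega
      have e1 : p ⟨x, hx1n⟩ = ⟨n - 1 - x, h2n⟩ :=
        Fin.ext (by rw [hv x hx1n]; simp only [Fin.val_mk]; split_ifs <;> omega)
      by_cases hxc : c ≤ x
      · -- branch 1 : two steps, T x = x - c
        have e2 : p ⟨n - 1 - x, h2n⟩ = ⟨x - c, by omega⟩ :=
          Fin.ext (by rw [hv (n-1-x) h2n]; simp only [Fin.val_mk]; split_ifs <;> omega)
        rcases m' with _ | m''
        · rw [pow_one, e1] at hm
          have := congrArg Fin.val hm
          simp only [Fin.val_mk] at this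
          omega
        · have hrw : (p ^ (m'' + 2)) (⟨x, hx1n⟩ : Fin n)
              = (p ^ m'') (p (p ⟨x, hx1n⟩)) := by
            rw [pow_succ, pow_succ, Equiv.Perm.mul_apply, Equiv.Perm.mul_apply]
          rw [hrw, e1, e2] at hm
          obtain ⟨k, hk⟩ := IH m'' (by omega) (x - c) y (by omega) hy hm
          refine ⟨k + 1, ?_⟩
          rw [Function.iterate_succ_apply]
          have hTx : T x = x - c := by simp only [hTdef]; rw [if_pos hxc]
          rw [hTx]; exact hk
      · push_neg at hxc
        have e2 : p ⟨n - 1 - x, h2n⟩ = ⟨x + b, by omega⟩ :=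
          Fin.ext (by rw [hv (n-1-x) h2n]; simp only [Fin.val_mk]; split_ifs <;> omega)
        by_cases hxb : x + b < a
        · -- branch 2 : two steps, T x = x + b
          rcases m' with _ | m''
          · rw [pow_one, e1] at hm
            have := congrArg Fin.val hm
            simp only [Fin.val_mk] at this
            omega
          · have hrw : (p ^ (m'' + 2)) (⟨x, hx1n⟩ : Fin n)
                = (p ^ m'') (p (p ⟨x, hx1n⟩)) := by
              rw [pow_succ, pow_succ, Equiv.Perm.mul_apply, Equiv.Perm.mul_apply]
            rw [hrw, e1, e2] at hm
            obtain ⟨k, hk⟩ := IH m'' (by omega) (x + b) y (by omega) hy hm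
            refine ⟨k + 1, ?_⟩
            rw [Function.iterate_succ_apply]
            have hTx : T x = x + b := by
              simp only [hTdef]; rw [if_neg (by omega), if_pos hxb]
            rw [hTx]; exact hk
        · -- branch 3 : three steps, T x = a - 1 - x
          push_neg at hxb
          have e3 : p ⟨x + b, by omega⟩ = ⟨a - 1 - x, by omega⟩ :=
            Fin.ext (by rw [hv (x+b) (by omega)]; simp only [Fin.val_mk]; split_ifs <;> omega)
          rcases m' with _ | _ | m''
          · rw [pow_one, e1] at hm
            have := congrArg Fin.val hm
            simp only [Fin.val_mk] at this
            omega
          · have hrw : (p ^ 2) (⟨x, hx1n⟩ : Fin n) = p (p ⟨x, hx1n⟩) := by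
              rw [pow_succ, pow_one, Equiv.Perm.mul_apply]
            rw [hrw, e1, e2] at hm
            have := congrArg Fin.val hm
            simp only [Fin.val_mk] at this
            omega
          · have hrw : (p ^ (m'' + 3)) (⟨x, hx1n⟩ : Fin n)
                = (p ^ m'') (p (p (p ⟨x, hx1n⟩))) := by
              rw [pow_succ, pow_succ, pow_succ, Equiv.Perm.mul_apply,
                Equiv.Perm.mul_apply, Equiv.Perm.mul_apply]
            rw [hrw, e1, e2, e3] at hm
            obtain ⟨k, hk⟩ := IH m'' (by omega) (a - 1 - x) y (by omega) hy hm
            refine ⟨k + 1, ?_⟩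
            rw [Function.iterate_succ_apply]
            have hTx : T x = a - 1 - x := by
              simp only [hTdef]; rw [if_neg (by omega), if_neg (by omega)]
            rw [hTx]; exact hk
  have htT : ∀ x y, x < a → y < a → ∃ k, T^[k] x = y := by
    intro x y hx hy
    obtain ⟨m, hm⟩ := hc ⟨x, hxan x hx⟩ ⟨y, hxan y hy⟩
    exact htrans m x y hx hy hm
  -- iterate closure
  have hitcl : ∀ k x, x < a → T^[k] x < a := by
    intro k
    induction k with
    | zero => intro x hx; simpa using hx
    | succ k ih =>
      intro x hx
      rw [Function.iterate_succ_apply']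
      exact hTcl _ (ih x hx)
  -- injectivity of T on [0,a)
  have hTinj : ∀ x x', x < a → x' < a → T x = T x' → x = x' := by
    intro x x' hx hx' he
    have h1 := hTrev x hx
    have h2 := hTrev x' hx'
    rw [he] at h1
    rw [h1] at h2
    omega
  have hiterinj : ∀ k x x', x < a → x' < a → T^[k] x = T^[k] x' → x = x' := by
    intro k
    induction k with
    | zero => intro x x' _ _ h; simpa using h
    | succ k ih =>
      intro x x' hx hx' h
      rw [Function.iterate_succ_apply, Function.iterate_succ_apply] at h
      exact hTinj x x' hx hx' (ih _ _ (hTcl x hx) (hTcl x' hx') h)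
  -- iterated reversal
  have hrevk : ∀ k x, x < a → T^[k] (a - 1 - T^[k] x) = a - 1 - x := by
    intro k
    induction k with
    | zero => intro x hx; simp
    | succ k ih =>
      intro x hx
      rw [Function.iterate_succ_apply' T k x]
      rw [Function.iterate_succ_apply T k (a - 1 - T (T^[k] x))]
      rw [hTrev _ (hitcl k x hx), ih x hx]
  -- two symmetric points give period relation
  have hsym2 : ∀ x j, x < a → T x = a - 1 - x → T (T^[j] x) = a - 1 - T^[j] x →
      T (T^[2*j] x) = T x := by
    intro x j hx hsx hsy
    have h1 : T^[j] (a - 1 - T^[j] x) = a - 1 - x := hrevk j x hx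
    rw [← hsy, ← hsx] at h1
    have h2 : T^[j] (T (T^[j] x)) = T (T^[2*j] x) := by
      rw [← Function.iterate_succ_apply T j (T^[j] x),
        ← Function.iterate_add_apply T (j+1) j x,
        ← Function.iterate_succ_apply' T (2*j) x]
      congr 1
      omega
    rw [h2] at h1
    exact h1
  -- core : any two distinct symmetric points give 2*j = a with T^[j] x₁ = x₂
  have core : ∀ x₁ x₂, x₁ < a → x₂ < a → x₁ ≠ x₂ → T x₁ = a - 1 - x₁ →
      T x₂ = a - 1 - x₂ → ∃ j, T^[j] x₁ = x₂ ∧ 2 * j = a := by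
    intro x₁ x₂ h1 h2 h12 hs1 hs2
    have hex : ∃ t, 0 < t ∧ T^[t] x₁ = x₁ := by
      have hmap : ∀ i ∈ Finset.range (a+1), T^[i] x₁ ∈ Finset.range a := by
        intro i _
        exact Finset.mem_range.mpr (hitcl i x₁ h1)
      have hlt : (Finset.range a).card < (Finset.range (a+1)).card := by simp
      obtain ⟨i, hi, i', hi', hne, heq⟩ :=
        Finset.exists_ne_map_eq_of_card_lt_of_maps_to hlt hmap
      rcases Nat.lt_or_ge i i' with hlt2 | hge
      · refine ⟨i' - i, by omega, ?_⟩
        have hh : T^[i + (i' - i)] x₁ = T^[i] x₁ := by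
          rw [show i + (i' - i) = i' by omega]; exact heq.symm
        rw [Function.iterate_add_apply] at hh
        exact hiterinj i _ _ (hitcl _ _ h1) h1 hh
      · have hlt2 : i' < i := by omega
        refine ⟨i - i', by omega, ?_⟩
        have hh : T^[i' + (i - i')] x₁ = T^[i'] x₁ := by
          rw [show i' + (i - i') = i by omega]; exact heq
        rw [Function.iterate_add_apply] at hh
        exact hiterinj i' _ _ (hitcl _ _ h1) h1 hh
    set r := Nat.find hex with hrdef
    have hrpos : 0 < r := (Nat.find_spec hex).1
    have hrper : T^[r] x₁ = x₁ := (Nat.find_spec hex).2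
    have hmin : ∀ t, 0 < t → t < r → T^[t] x₁ ≠ x₁ := by
      intro t ht htr hcontra
      exact Nat.find_min hex htr ⟨ht, hcontra⟩
    have hmul : ∀ q, T^[r * q] x₁ = x₁ := by
      intro q
      induction q with
      | zero => simp
      | succ q ih => rw [Nat.mul_succ, Function.iterate_add_apply, hrper, ih]
    have hmod : ∀ k, T^[k] x₁ = T^[k % r] x₁ := by
      intro k
      conv_lhs => rw [← Nat.mod_add_div k r]
      rw [Function.iterate_add_apply, hmul]
    have hra : r = a := by
      have hinj' : ∀ i i', i < r → i' < r → T^[i] x₁ = T^[i'] x₁ → i = i' := by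
        intro i i' hi hi' he
        rcases Nat.lt_trichotomy i i' with h | h | h
        · exfalso
          have hh : T^[i + (i' - i)] x₁ = T^[i] x₁ := by
            rw [show i + (i' - i) = i' by omega]; exact he.symm
          rw [Function.iterate_add_apply] at hh
          exact hmin (i' - i) (by omega) (by omega) (hiterinj i _ _ (hitcl _ _ h1) h1 hh)
        · exact h
        · exfalso
          have hh : T^[i' + (i - i')] x₁ = T^[i'] x₁ := by
            rw [show i' + (i - i') = i by omega]; exact he
          rw [Function.iterate_add_apply] at hh
          exact hmin (i - i') (by omega) (by omega) (hiterinj i' _ _ (hitcl _ _ h1) h1 hh)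
      have hle1 : r ≤ a := by
        have := Finset.card_le_card_of_injOn (f := fun i => T^[i] x₁)
          (s := Finset.range r) (t := Finset.range a)
          (by intro i _; exact Finset.mem_range.mpr (hitcl _ _ h1))
          (by
            intro i hi i' hi' he
            exact hinj' i i' (Finset.mem_range.mp hi) (Finset.mem_range.mp hi') he)
        simpa using this
      have hle2 : a ≤ r := by
        have hsub : Finset.range a ⊆ (Finset.range r).image (fun i => T^[i] x₁) := by
          intro z hz
          rw [Finset.mem_image]
          obtain ⟨k, hk⟩ := htT x₁ z h1 (Finset.mem_range.mp hz)
          exact ⟨k % r, Finset.mem_range.mpr (Nat.mod_lt _ hrpos), by rw [← hmod]; exact hk⟩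
        calc a = (Finset.range a).card := (Finset.card_range a).symm
          _ ≤ ((Finset.range r).image (fun i => T^[i] x₁)).card := Finset.card_le_card hsub
          _ ≤ (Finset.range r).card := Finset.card_image_le
          _ = r := Finset.card_range r
      omega
    obtain ⟨k, hk⟩ := htT x₁ x₂ h1 h2
    set j := k % r with hjdef
    have hjr : j < r := Nat.mod_lt _ hrpos
    have hjx : T^[j] x₁ = x₂ := by rw [hjdef, ← hmod]; exact hk
    have hj0 : j ≠ 0 := by
      intro h0
      rw [h0] at hjx
      simp at hjx
      exact h12 hjx
    have h2j : T^[2*j] x₁ = x₁ := by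
      have := hsym2 x₁ j h1 hs1 (by rw [hjx]; exact hs2)
      exact hTinj _ _ (hitcl _ _ h1) h1 this
    have hdvd : r ∣ 2 * j := by
      have h0 : (2 * j) % r = 0 := by
        by_contra hne0
        exact hmin ((2*j) % r) (Nat.pos_of_ne_zero hne0) (Nat.mod_lt _ hrpos)
          (by rw [← hmod]; exact h2j)
      exact Nat.dvd_of_mod_eq_zero h0
    obtain ⟨q, hq⟩ := hdvd
    have hq0 : q ≠ 0 := by
      rintro rfl
      simp at hq
      omega
    have hq2 : q < 2 := by
      by_contra hge
      push_neg at hge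
      have : r * 2 ≤ r * q := Nat.mul_le_mul_left r hge
      omega
    have hq1 : q = 1 := by omega
    rw [hq1, mul_one] at hq
    exact ⟨j, hjx, by omega⟩
  -- conclusion : n ≤ 2a + 2
  have hwin : ∀ x, a - b ≤ x → x + a + b < n → x < a ∧ T x = a - 1 - x := by
    intro x hx1 hx2
    have hxa : x < a := by omega
    refine ⟨hxa, ?_⟩
    simp only [hTdef]
    rw [if_neg (by omega), if_neg (by omega)]
  have hd2 : n ≤ 2 * a + 2 := by
    by_contra hcon
    push_neg at hcon
    obtain ⟨_, hw1⟩ := hwin (a - b) (le_refl _) (by omega)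
    obtain ⟨_, hw2⟩ := hwin (a - b + 1) (by omega) (by omega)
    obtain ⟨_, hw3⟩ := hwin (a - b + 2) (by omega) (by omega)
    obtain ⟨j2, hj2x, hj2⟩ := core (a - b) (a - b + 1) (by omega) (by omega) (by omega) hw1 hw2
    obtain ⟨j3, hj3x, hj3⟩ := core (a - b) (a - b + 2) (by omega) (by omega) (by omega) hw1 hw3
    have : j2 = j3 := by omega
    rw [this, hj3x] at hj2x
    omega
  refine ⟨hba, hca, h2a, hd2, ?_⟩
  intro hd2'
  obtain ⟨_, hw1⟩ := hwin (a - b) (le_refl _) (by omega)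
  obtain ⟨_, hw2⟩ := hwin (a - b + 1) (by omega) (by omega)
  have ha2 : 2 ∣ a := by
    by_contra hodd
    obtain ⟨j2, hj2x, hj2⟩ := core (a - b) (a - b + 1) (by omega) (by omega) (by omega) hw1 hw2
    omega
  refine ⟨ha2, ?_⟩
  by_contra hbodd
  set t : ℕ := (a - b - 1) / 2 with htdef
  have hbt : b < a := by
    rcases Nat.lt_or_ge b a with h | h
    · exact h
    · exfalso; omega
  have h2t : 2 * t = a - b - 1 := by omega
  have hta : t < a := by omega
  have hTt : T t = a - 1 - t := by
    simp only [hTdef]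
    rw [if_neg (by omega), if_pos (by omega)]
    omega
  obtain ⟨j2, hj2x, hj2⟩ := core (a - b) (a - b + 1) (by omega) (by omega) (by omega) hw1 hw2
  obtain ⟨j3, hj3x, hj3⟩ := core (a - b) t (by omega) hta (by omega) hw1 hTt
  have : j2 = j3 := by omega
  rw [this, hj3x] at hj2x
  omega


lemma exists_ab {n : ℕ} (hn : 4 ≤ n)
    (P : {p : Equiv.Perm (Fin n) // IsCyclicPerm p ∧ Avoids p pat123 ∧ Avoids p pat231}) :
    ∃ ab : ℕ × ℕ,
      IsTriplePerm n ab.1 ab.2 P.1 ∧ 1 ≤ ab.2 ∧ ab.1 + ab.2 < n ∧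
        2 * ab.1 ≤ n ∧ n ≤ 2 * ab.1 + 2 ∧ (n = 2 * ab.1 + 2 → 2 ∣ ab.1 ∧ 2 ∣ ab.2) := by
  obtain ⟨p, hcyc, h123, h231⟩ := P
  rcases toTriple p h123 h231 with hdec | ⟨a, b, hb, hab, ht⟩
  · exact absurd hcyc (not_cyclic_of_dec p (by omega) hdec)
  · obtain ⟨hba, hca, h2a, hd2, hpar⟩ := triple_constraints p hn a b hb hab ht hcyc
    exact ⟨(a, b), ht, hb, hab, h2a, hd2, hpar⟩

end Stmt15

theorem stmt15 (n : ℕ) (hn : 4 ≤ n) :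
    Nat.card {p : Equiv.Perm (Fin n) //
        IsCyclicPerm p ∧ Avoids p pat123 ∧ Avoids p pat231} ≤ (3 * n - 6) / 4 := by
  classical
  set q : ℕ := (3 * n - 6) / 4 with hq
  have hqpos : 0 < q := by omega
  set F : {p : Equiv.Perm (Fin n) //
      IsCyclicPerm p ∧ Avoids p pat123 ∧ Avoids p pat231} → Fin q := fun P =>
    ⟨if n = 2 * (Stmt15.exists_ab hn P).choose.1 + 2
        then (n - 2) / 2 - 1 + (Stmt15.exists_ab hn P).choose.2 / 2
        else (Stmt15.exists_ab hn P).choose.2 - 1, by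
      obtain ⟨ht, hb, hab, h2a, hd2, hpar⟩ := (Stmt15.exists_ab hn P).choose_spec
      set a := (Stmt15.exists_ab hn P).choose.1
      set b := (Stmt15.exists_ab hn P).choose.2
      by_cases hcase : n = 2 * a + 2
      · rw [if_pos hcase]
        obtain ⟨ha2, hb2⟩ := hpar hcase
        omega
      · rw [if_neg hcase]
        omega⟩
    with hF
  have hinj : Function.Injective F := by
    intro P P' hPP
    obtain ⟨ht, hb, hab, h2a, hd2, hpar⟩ := (Stmt15.exists_ab hn P).choose_spec
    obtain ⟨ht', hb', hab', h2a', hd2', hpar'⟩ := (Stmt15.exists_ab hn P').choose_spec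
    set a := (Stmt15.exists_ab hn P).choose.1 with hadef
    set b := (Stmt15.exists_ab hn P).choose.2 with hbdef
    set a' := (Stmt15.exists_ab hn P').choose.1 with hadef'
    set b' := (Stmt15.exists_ab hn P').choose.2 with hbdef'
    have hval := congrArg Fin.val hPP
    simp only [hF] at hval
    have heq : a = a' ∧ b = b' := by
      by_cases hc1 : n = 2 * a + 2 <;> by_cases hc2 : n = 2 * a' + 2
      · rw [if_pos hc1, if_pos hc2] at hval
        obtain ⟨x1, x2⟩ := hpar hc1
        obtain ⟨y1, y2⟩ := hpar' hc2
        constructor <;> omega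
      · rw [if_pos hc1, if_neg hc2] at hval
        obtain ⟨x1, x2⟩ := hpar hc1
        constructor <;> omega
      · rw [if_neg hc1, if_pos hc2] at hval
        obtain ⟨y1, y2⟩ := hpar' hc2
        constructor <;> omega
      · rw [if_neg hc1, if_neg hc2] at hval
        constructor <;> omega
    have hperm : P.1 = P'.1 := by
      apply Equiv.ext
      intro i
      apply Fin.ext
      rw [ht i, ht' i, heq.1, heq.2]
    exact Subtype.ext hperm
  calc Nat.card {p : Equiv.Perm (Fin n) //
        IsCyclicPerm p ∧ Avoids p pat123 ∧ Avoids p pat231}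
      ≤ Nat.card (Fin q) := Nat.card_le_card_of_injective F hinj
    _ = q := by simp
end
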